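/- arXiv:1111.1312 — 8 statements merged into one kernel-verified Lean document; each statement's English description precedes it below -/
import Mathlib

section
/- Let G be a group generated by elements σ₁, …, σ_m (m ≥ 1) such that (σ_i σ_{i+1})² = 1 for all 1 ≤ i ≤ m−1, each σ_i has finite odd order, and σ_k = 1 for at least one index k. Then G is the trivial group. -/
/-- If `G` is generated by `σ_1, …, σ_m` with `(σ_i σ_{i+1})² = 1` for consecutive indices,
each `σ_i` of finite odd order, and `σ_k = 1` for some `k`, then `G` is trivial. -/
theorem stmt_6 (G : Type*) [Group G] (m : ℕ) (hm : 1 ≤ m) (σ : ℕ → G)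
    (hgen : Subgroup.closure (σ '' Set.Icc 1 m) = ⊤)
    (hrel : ∀ i : ℕ, 1 ≤ i → i ≤ m - 1 → (σ i * σ (i + 1)) ^ 2 = 1)
    (hodd : ∀ i : ℕ, 1 ≤ i → i ≤ m → IsOfFinOrder (σ i) ∧ Odd (orderOf (σ i)))
    (k : ℕ) (hk1 : 1 ≤ k) (hk2 : k ≤ m) (hk : σ k = 1) :
    ∀ g : G, g = 1 := by
  -- helper: x^2 = 1 and odd finite order implies x = 1
  have sq1 : ∀ i : ℕ, 1 ≤ i → i ≤ m → (σ i) ^ 2 = 1 → σ i = 1 := by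
    intro i h1 h2 hx
    obtain ⟨hf, hoddi⟩ := hodd i h1 h2
    have hdvd : orderOf (σ i) ∣ 2 := orderOf_dvd_of_pow_eq_one hx
    have h1' : orderOf (σ i) = 1 := by
      rcases hoddi with ⟨t, ht⟩
      rcases (Nat.dvd_prime Nat.prime_two).mp hdvd with h | h <;> omega
    exact orderOf_eq_one_iff.mp h1'
  -- upward
  have up : ∀ j : ℕ, k + j ≤ m → σ (k + j) = 1 := by
    intro j
    induction j with
    | zero => intro _; simpa using hk
    | succ n ih =>
      intro hle
      have h1 : σ (k + n) = 1 := ih (by omega)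
      have hr := hrel (k + n) (by omega) (by omega)
      rw [h1, one_mul] at hr
      have : k + n + 1 = k + (n + 1) := by omega
      rw [this] at hr
      exact sq1 _ (by omega) hle hr
  -- downward
  have down : ∀ j : ℕ, j < k → σ (k - j) = 1 := by
    intro j
    induction j with
    | zero => intro _; simpa using hk
    | succ n ih =>
      intro hlt
      have h1 : σ (k - n) = 1 := ih (by omega)
      have hr := hrel (k - (n + 1)) (by omega) (by omega)
      have heq : k - (n + 1) + 1 = k - n := by omega
      rw [heq, h1, mul_one] at hr
      exact sq1 _ (by omega) (by omega) hr
  have hall : ∀ i : ℕ, 1 ≤ i → i ≤ m → σ i = 1 := by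
    intro i h1 h2
    rcases le_or_gt i k with h | h
    · have : k - (k - i) = i := by omega
      rw [← this]; exact down (k - i) (by omega)
    · have : k + (i - k) = i := by omega
      rw [← this]; exact up (i - k) (by omega)
  have hsub : σ '' Set.Icc 1 m ⊆ {(1 : G)} := by
    rintro x ⟨i, ⟨hi1, hi2⟩, rfl⟩
    exact hall i hi1 hi2
  have hle : (⊤ : Subgroup G) ≤ ⊥ := by
    rw [← hgen]
    apply (Subgroup.closure_le ⊥).mpr
    intro x hx
    have := hsub hx
    simpa using this
  intro g
  have : g ∈ (⊥ : Subgroup G) := hle (Subgroup.mem_top g)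
  simpa using this
end

section
/- Let n ≥ 3, let Λ and Δ be groups, let σ₁, …, σ_{n−1} ∈ Λ and σ′₁, …, σ′_{n−1} ∈ Δ, and set β_k = (σ_k, σ′_k) ∈ Λ × Δ. Suppose ⟨σ₁, …, σ_{n−2}⟩ ⊓ ⟨σ₂, …, σ_{n−1}⟩ = ⟨σ₂, …, σ_{n−2}⟩ in Λ, and ⟨σ′₁, …, σ′_{n−2}⟩ ⊓ ⟨σ′₂, …, σ′_{n−1}⟩ = ⟨σ′₂, …, σ′_{n−2}⟩ in Δ. If ⟨β₂, …, β_{n−2}⟩ = ⟨σ₂, …, σ_{n−2}⟩ × ⟨σ′₂, …, σ′_{n−2}⟩ (product subgroup of Λ × Δ), then ⟨β₁, …, β_{n−2}⟩ ⊓ ⟨β₂, …, β_{n−1}⟩ = ⟨β₂, …, β_{n−2}⟩. (Subgroups generated by an empty list of elements are the trivial subgroup.) -/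
/-- If `⟨σ₁,…,σ_{n-2}⟩ ⊓ ⟨σ₂,…,σ_{n-1}⟩ = ⟨σ₂,…,σ_{n-2}⟩` in `Λ`, likewise for the `σ'` in
`Δ`, and `⟨β₂,…,β_{n-2}⟩` is the product subgroup `⟨σ₂,…,σ_{n-2}⟩ × ⟨σ'₂,…,σ'_{n-2}⟩`, then
`⟨β₁,…,β_{n-2}⟩ ⊓ ⟨β₂,…,β_{n-1}⟩ = ⟨β₂,…,β_{n-2}⟩`, where `β_k = (σ_k, σ'_k)`. -/
theorem stmt_10 (Λ Δ : Type*) [Group Λ] [Group Δ] (n : ℕ) (hn : 3 ≤ n)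
    (σ : ℕ → Λ) (σ' : ℕ → Δ) (β : ℕ → Λ × Δ) (hβ : ∀ k, β k = (σ k, σ' k))
    (hΛ : Subgroup.closure (σ '' Set.Icc 1 (n - 2)) ⊓
          Subgroup.closure (σ '' Set.Icc 2 (n - 1)) =
        Subgroup.closure (σ '' Set.Icc 2 (n - 2)))
    (hΔ : Subgroup.closure (σ' '' Set.Icc 1 (n - 2)) ⊓
          Subgroup.closure (σ' '' Set.Icc 2 (n - 1)) =
        Subgroup.closure (σ' '' Set.Icc 2 (n - 2)))
    (hmid : Subgroup.closure (β '' Set.Icc 2 (n - 2)) =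
        (Subgroup.closure (σ '' Set.Icc 2 (n - 2))).prod
          (Subgroup.closure (σ' '' Set.Icc 2 (n - 2)))) :
    Subgroup.closure (β '' Set.Icc 1 (n - 2)) ⊓
      Subgroup.closure (β '' Set.Icc 2 (n - 1)) =
      Subgroup.closure (β '' Set.Icc 2 (n - 2)) := by
  have key : ∀ S : Set ℕ, Subgroup.closure (β '' S) ≤
      (Subgroup.closure (σ '' S)).prod (Subgroup.closure (σ' '' S)) := by
    intro S
    rw [Subgroup.closure_le]
    rintro x ⟨k, hk, rfl⟩
    rw [hβ]
    exact ⟨Subgroup.subset_closure ⟨k, hk, rfl⟩, Subgroup.subset_closure ⟨k, hk, rfl⟩⟩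
  apply le_antisymm
  · rintro x ⟨h1, h2⟩
    have p1 := key _ h1
    have p2 := key _ h2
    rw [hmid]
    exact ⟨hΛ ▸ Subgroup.mem_inf.mpr ⟨p1.1, p2.1⟩, hΔ ▸ Subgroup.mem_inf.mpr ⟨p1.2, p2.2⟩⟩
  · refine le_inf (Subgroup.closure_mono (Set.image_mono ?_))
      (Subgroup.closure_mono (Set.image_mono ?_))
    · exact Set.Icc_subset_Icc_left (by omega)
    · exact Set.Icc_subset_Icc_right (by omega)
end

section
/- Let n ≥ 3, let Λ and Δ be groups, let σ₁, …, σ_{n−1} ∈ Λ and σ′₁, …, σ′_{n−1} ∈ Δ, and set β_k = (σ_k, σ′_k) ∈ Λ × Δ. Suppose ⟨σ₁, …, σ_{n−2}⟩ ⊓ ⟨σ₂, …, σ_{n−1}⟩ = ⟨σ₂, …, σ_{n−2}⟩ in Λ, and ⟨σ′₁, …, σ′_{n−2}⟩ ⊓ ⟨σ′₂, …, σ′_{n−1}⟩ = ⟨σ′₂, …, σ′_{n−2}⟩ in Δ. Suppose further that ⟨β₁, …, β_{n−2}⟩ = ⟨σ₁, …, σ_{n−2}⟩ × ⟨σ′₁,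 …, σ′_{n−2}⟩ and ⟨β₂, …, β_{n−1}⟩ = ⟨σ₂, …, σ_{n−1}⟩ × ⟨σ′₂, …, σ′_{n−1}⟩ (product subgroups of Λ × Δ). Then ⟨β₁, …, β_{n−2}⟩ ⊓ ⟨β₂, …, β_{n−1}⟩ = ⟨β₂, …, β_{n−2}⟩ if and only if ⟨β₂, …, β_{n−2}⟩ = ⟨σ₂, …, σ_{n−2}⟩ × ⟨σ′₂, …, σ′_{n−2}⟩. (Subgroups generated by an empty list of elements are the trivial subgroup.) -/
lemma subgroup_prod_inf_prod {Λ Δ : Type*} [Group Λ] [Group Δ]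
    (A₁ A₂ : Subgroup Λ) (B₁ B₂ : Subgroup Δ) :
    A₁.prod B₁ ⊓ A₂.prod B₂ = (A₁ ⊓ A₂).prod (B₁ ⊓ B₂) := by
  ext x
  simp [Subgroup.mem_prod, and_assoc, and_left_comm]

/-- If `⟨σ₁,…,σ_{n-2}⟩ ⊓ ⟨σ₂,…,σ_{n-1}⟩ = ⟨σ₂,…,σ_{n-2}⟩` in `Λ`, likewise for the `σ'` in
`Δ`, and `⟨β₁,…,β_{n-2}⟩` and `⟨β₂,…,β_{n-1}⟩` are the product subgroups of the corresponding
subgroups of `Λ` and `Δ`, then `⟨β₁,…,β_{n-2}⟩ ⊓ ⟨β₂,…,β_{n-1}⟩ = ⟨β₂,…,β_{n-2}⟩` if and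
only if `⟨β₂,…,β_{n-2}⟩ = ⟨σ₂,…,σ_{n-2}⟩ × ⟨σ'₂,…,σ'_{n-2}⟩`. -/
theorem stmt_11 (Λ Δ : Type*) [Group Λ] [Group Δ] (n : ℕ) (hn : 3 ≤ n)
    (σ : ℕ → Λ) (σ' : ℕ → Δ) (β : ℕ → Λ × Δ) (hβ : ∀ k, β k = (σ k, σ' k))
    (hΛ : Subgroup.closure (σ '' Set.Icc 1 (n - 2)) ⊓
          Subgroup.closure (σ '' Set.Icc 2 (n - 1)) =
        Subgroup.closure (σ '' Set.Icc 2 (n - 2)))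
    (hΔ : Subgroup.closure (σ' '' Set.Icc 1 (n - 2)) ⊓
          Subgroup.closure (σ' '' Set.Icc 2 (n - 1)) =
        Subgroup.closure (σ' '' Set.Icc 2 (n - 2)))
    (hfac : Subgroup.closure (β '' Set.Icc 1 (n - 2)) =
        (Subgroup.closure (σ '' Set.Icc 1 (n - 2))).prod
          (Subgroup.closure (σ' '' Set.Icc 1 (n - 2))))
    (hvf : Subgroup.closure (β '' Set.Icc 2 (n - 1)) =
        (Subgroup.closure (σ '' Set.Icc 2 (n - 1))).prod
          (Subgroup.closure (σ' '' Set.Icc 2 (n - 1)))) :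
    (Subgroup.closure (β '' Set.Icc 1 (n - 2)) ⊓
        Subgroup.closure (β '' Set.Icc 2 (n - 1)) =
        Subgroup.closure (β '' Set.Icc 2 (n - 2))) ↔
      Subgroup.closure (β '' Set.Icc 2 (n - 2)) =
        (Subgroup.closure (σ '' Set.Icc 2 (n - 2))).prod
          (Subgroup.closure (σ' '' Set.Icc 2 (n - 2))) := by
  rw [hfac, hvf, subgroup_prod_inf_prod, hΛ, hΔ, eq_comm]
end

section
/- Let n ≥ 3. Let W_T be the Coxeter group on generators s₁, …, s_n of the string Coxeter diagram with all consecutive edge labels equal to 3 (Coxeter matrix with m(i,i+1) = 3 for 1 ≤ i ≤ n−1 and m(i,j) = 2 for |i−j| ≥ 2), and let W_B be the Coxeter group on generators s′₁, …, s′_n of the string diagram with consecutive edge labels 4, 3, …, 3 (m(1,2) = 4, m(i,i+1) = 3 for 2 ≤ i ≤ n−1, m(i,j) = 2 for |i−j| ≥ 2). Set σ_i = s_i s_{i+1} in W_T and σ′_i = s′_i s′_{i+1} in W_B for i = 1, …, n−1. Then the subgroup of W_T × W_B generated by the pairs (σ_i, σ′_i), i = 1, …, n−1, equals the product subgroup ⟨σ₁,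 …, σ_{n−1}⟩ × ⟨σ′₁, …, σ′_{n−1}⟩. -/
/-- For `n ≥ 3`, the subgroup of `W_T × W_B` (simplex and cube Coxeter groups) generated by
the pairs `(σ_i, σ'_i)` of abstract rotations equals the product of the rotation subgroups. -/
theorem stmt_12 (n : ℕ) (hn : 3 ≤ n)
    (MT MB : CoxeterMatrix (Fin n))
    (hMT : ∀ i j : Fin n, MT.M i j =
      if i = j then 1
      else if (i : ℕ) + 1 = (j : ℕ) ∨ (j : ℕ) + 1 = (i : ℕ) then 3 else 2)
    (hMB : ∀ i j : Fin n, MB.M i j =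
      if i = j then 1
      else if (i : ℕ) + 1 = (j : ℕ) ∨ (j : ℕ) + 1 = (i : ℕ) then
        (if (i : ℕ) = 0 ∨ (j : ℕ) = 0 then 4 else 3)
      else 2) :
    Subgroup.closure
        {p : MT.Group × MB.Group |
          ∃ i j : Fin n, (j : ℕ) = (i : ℕ) + 1 ∧
            p = (MT.simple i * MT.simple j, MB.simple i * MB.simple j)} =
      (Subgroup.closure
          {x : MT.Group |
            ∃ i j : Fin n, (j : ℕ) = (i : ℕ) + 1 ∧ x = MT.simple i * MT.simple j}).prod
        (Subgroup.closure
          {x : MB.Group |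
            ∃ i j : Fin n, (j : ℕ) = (i : ℕ) + 1 ∧ x = MB.simple i * MB.simple j}) := by
  classical
  set S : Set (MT.Group × MB.Group) :=
    {p : MT.Group × MB.Group |
      ∃ i j : Fin n, (j : ℕ) = (i : ℕ) + 1 ∧
        p = (MT.simple i * MT.simple j, MB.simple i * MB.simple j)} with hS
  set K : Subgroup (MT.Group × MB.Group) := Subgroup.closure S with hK
  have csT := MT.toCoxeterSystem
  have csB := MB.toCoxeterSystem
  -- basic Coxeter relations, specialized
  have powT : ∀ i j : Fin n, (MT.simple i * MT.simple j) ^ MT.M i j = 1 :=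
    fun i j => MT.toCoxeterSystem.simple_mul_simple_pow i j
  have powB : ∀ i j : Fin n, (MB.simple i * MB.simple j) ^ MB.M i j = 1 :=
    fun i j => MB.toCoxeterSystem.simple_mul_simple_pow i j
  have selfT : ∀ i : Fin n, MT.simple i * MT.simple i = 1 :=
    fun i => MT.toCoxeterSystem.simple_mul_simple_self i
  have selfB : ∀ i : Fin n, MB.simple i * MB.simple i = 1 :=
    fun i => MB.toCoxeterSystem.simple_mul_simple_self i
  -- helper to close out membership goals
  have finish : ∀ (x : MT.Group) (y : MB.Group), (x, y) ∈ K →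
      (((1:MT.Group), y⁻¹) ∈ K) →
      ((x, (1:MB.Group)) ∈ K ∧ ((1:MT.Group), y) ∈ K) := by
    intro x y hxy hy
    have hy' : ((1:MT.Group), y) ∈ K := by simpa using K.inv_mem hy
    refine ⟨?_, hy'⟩
    have := K.mul_mem hxy (K.inv_mem hy')
    simpa using this
  -- main claim by induction
  have claim : ∀ k : ℕ, ∀ i j : Fin n, (i : ℕ) = k → (j : ℕ) = (i : ℕ) + 1 →
      ((MT.simple i * MT.simple j, (1:MB.Group)) ∈ K ∧
        ((1:MT.Group), MB.simple i * MB.simple j) ∈ K) := by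
    intro k
    induction k with
    | zero =>
      intro i j hi hij
      have hgen : (MT.simple i * MT.simple j, MB.simple i * MB.simple j) ∈ K :=
        Subgroup.subset_closure ⟨i, j, hij, rfl⟩
      have hijne : i ≠ j := by
        intro h; rw [h] at hij; omega
      have hMB4 : MB.M i j = 4 := by
        rw [hMB]; rw [if_neg hijne, if_pos (Or.inl hij.symm), if_pos (Or.inl hi)]
      have hMT3 : MT.M i j = 3 := by
        rw [hMT]; rw [if_neg hijne, if_pos (Or.inl hij.symm)]
      have hT : (MT.simple i * MT.simple j) ^ 3 = 1 := by
        have := powT i j; rwa [hMT3] at this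
      have hB4 : (MB.simple i * MB.simple j) ^ 4 = 1 := by
        have := powB i j; rwa [hMB4] at this
      have hB3 : (MB.simple i * MB.simple j) ^ 3 = (MB.simple i * MB.simple j)⁻¹ := by
        have h1 : (MB.simple i * MB.simple j) * (MB.simple i * MB.simple j) ^ 3 = 1 := by
          rw [← pow_succ']; exact hB4
        exact (inv_eq_of_mul_eq_one_right h1).symm
      have hcube : ((MT.simple i * MT.simple j, MB.simple i * MB.simple j)
          : MT.Group × MB.Group) ^ 3
          = ((1:MT.Group), (MB.simple i * MB.simple j)⁻¹) := by
        rw [Prod.pow_mk, hT, hB3]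
      have hmem : ((1:MT.Group), (MB.simple i * MB.simple j)⁻¹) ∈ K := by
        rw [← hcube]; exact K.pow_mem hgen 3
      exact finish _ _ hgen hmem
    | succ k ih =>
      intro i j hi hij
      have hkn : k < n := by omega
      have hk1n : k + 1 < n := by have := j.isLt; omega
      set i' : Fin n := ⟨k, hkn⟩ with hi'
      have hprev := ih i' i rfl (by simp [hi', hi])
      have hgen : (MT.simple i * MT.simple j, MB.simple i * MB.simple j) ∈ K :=
        Subgroup.subset_closure ⟨i, j, hij, rfl⟩
      have hijne : i ≠ j := by intro h; rw [h] at hij; omega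
      have hi'jne : i' ≠ j := by
        intro h
        have : (i' : ℕ) = (j : ℕ) := by rw [h]
        simp [hi'] at this; omega
      have hMT3 : MT.M i j = 3 := by
        rw [hMT]; rw [if_neg hijne, if_pos (Or.inl hij.symm)]
      have hMB3 : MB.M i j = 3 := by
        rw [hMB]; rw [if_neg hijne, if_pos (Or.inl hij.symm)]
        rw [if_neg]; omega
      have hMT2 : MT.M i' j = 2 := by
        rw [hMT]; rw [if_neg hi'jne, if_neg]
        simp only [hi']; omega
      -- (σ_k σ_{k+1})^2 = 1 in W_T
      have hsig2 : (MT.simple i' * MT.simple i * (MT.simple i * MT.simple j)) ^ 2 = 1 := by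
        have hcol : MT.simple i' * MT.simple i * (MT.simple i * MT.simple j)
            = MT.simple i' * MT.simple j := by
          rw [mul_assoc (MT.simple i'), ← mul_assoc (MT.simple i), selfT i, one_mul]
        rw [hcol]
        have := powT i' j; rwa [hMT2] at this
      have hB3' : (MB.simple i * MB.simple j) ^ 3 = 1 := by
        have := powB i j; rwa [hMB3] at this
      have hBsq : (MB.simple i * MB.simple j) ^ 2 = (MB.simple i * MB.simple j)⁻¹ := by
        have h1 : (MB.simple i * MB.simple j) * (MB.simple i * MB.simple j) ^ 2 = 1 := by
          rw [← pow_succ']; exact hB3'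
        exact (inv_eq_of_mul_eq_one_right h1).symm
      have he : ((MT.simple i' * MT.simple i, (1:MB.Group))
            * (MT.simple i * MT.simple j, MB.simple i * MB.simple j)) ^ 2
          = ((1:MT.Group), (MB.simple i * MB.simple j)⁻¹) := by
        rw [Prod.mk_mul_mk, one_mul, Prod.pow_mk, hsig2, hBsq]
      have hmem : ((1:MT.Group), (MB.simple i * MB.simple j)⁻¹) ∈ K := by
        rw [← he]; exact K.pow_mem (K.mul_mem hprev.1 hgen) 2
      exact finish _ _ hgen hmem
  -- now both inclusions
  apply le_antisymm
  · rw [hK]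
    apply Subgroup.closure_le _ |>.mpr
    rintro p ⟨i, j, hij, rfl⟩
    exact Subgroup.mem_prod.mpr
      ⟨Subgroup.subset_closure ⟨i, j, hij, rfl⟩, Subgroup.subset_closure ⟨i, j, hij, rfl⟩⟩
  · rintro ⟨a, b⟩ hab
    rw [Subgroup.mem_prod] at hab
    have ha : (a, (1:MB.Group)) ∈ K := by
      have h1 : Subgroup.closure
          {x : MT.Group | ∃ i j : Fin n, (j : ℕ) = (i : ℕ) + 1 ∧
              x = MT.simple i * MT.simple j}
          ≤ K.comap (MonoidHom.inl MT.Group MB.Group) := by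
        apply Subgroup.closure_le _ |>.mpr
        rintro x ⟨i, j, hij, rfl⟩
        exact (claim (i : ℕ) i j rfl hij).1
      exact h1 hab.1
    have hb : ((1:MT.Group), b) ∈ K := by
      have h1 : Subgroup.closure
          {x : MB.Group | ∃ i j : Fin n, (j : ℕ) = (i : ℕ) + 1 ∧
              x = MB.simple i * MB.simple j}
          ≤ K.comap (MonoidHom.inr MT.Group MB.Group) := by
        apply Subgroup.closure_le _ |>.mpr
        rintro x ⟨i, j, hij, rfl⟩
        exact (claim (i : ℕ) i j rfl hij).2
      exact h1 hab.2
    have := K.mul_mem ha hb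
    simpa using this
end

section
/- Let n ≥ 3. Let W_T be the Coxeter group on generators s₁, …, s_n of the string Coxeter diagram with all consecutive edge labels equal to 3, and let W_C be the Coxeter group on generators s″₁, …, s″_n of the string diagram with consecutive edge labels 3, …, 3, 4 (m(i,i+1) = 3 for 1 ≤ i ≤ n−2, m(n−1,n) = 4, m(i,j) = 2 for |i−j| ≥ 2). Set σ_i = s_i s_{i+1} in W_T and σ″_i = s″_i s″_{i+1} in W_C for i = 1, …, n−1. Then the subgroup of W_T × W_C generated by the pairs (σ_i, σ″_i), i = 1, …, n−1, equals the product subgroup ⟨σ₁, …, σ_{n−1}⟩ × ⟨σ″₁, …, σ″_{n−1}⟩. -/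
/-- For `n ≥ 3`, the subgroup of `W_T × W_C` (simplex and cross-polytope Coxeter groups)
generated by the pairs `(σ_i, σ''_i)` of abstract rotations equals the product of the
rotation subgroups. -/
theorem stmt_13 (n : ℕ) (hn : 3 ≤ n)
    (MT MC : CoxeterMatrix (Fin n))
    (hMT : ∀ i j : Fin n, MT.M i j =
      if i = j then 1
      else if (i : ℕ) + 1 = (j : ℕ) ∨ (j : ℕ) + 1 = (i : ℕ) then 3 else 2)
    (hMC : ∀ i j : Fin n, MC.M i j =
      if i = j then 1
      else if (i : ℕ) + 1 = (j : ℕ) ∨ (j : ℕ) + 1 = (i : ℕ) then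
        (if (i : ℕ) = n - 1 ∨ (j : ℕ) = n - 1 then 4 else 3)
      else 2) :
    Subgroup.closure
        {p : MT.Group × MC.Group |
          ∃ i j : Fin n, (j : ℕ) = (i : ℕ) + 1 ∧
            p = (MT.simple i * MT.simple j, MC.simple i * MC.simple j)} =
      (Subgroup.closure
          {x : MT.Group |
            ∃ i j : Fin n, (j : ℕ) = (i : ℕ) + 1 ∧ x = MT.simple i * MT.simple j}).prod
        (Subgroup.closure
          {x : MC.Group |
            ∃ i j : Fin n, (j : ℕ) = (i : ℕ) + 1 ∧ x = MC.simple i * MC.simple j}) := by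
  have relT : ∀ i j : Fin n, (MT.simple i * MT.simple j) ^ MT.M i j = 1 := fun i j => by
    simpa using MT.toCoxeterSystem.simple_mul_simple_pow i j
  have relC : ∀ i j : Fin n, (MC.simple i * MC.simple j) ^ MC.M i j = 1 := fun i j => by
    simpa using MC.toCoxeterSystem.simple_mul_simple_pow i j
  -- squares of simple reflections
  have ssC : ∀ j : Fin n, MC.simple j * MC.simple j = 1 := fun j => by
    have h1 : MC.M j j = 1 := by rw [hMC, if_pos rfl]
    have := relC j j; rwa [h1, pow_one] at this
  set σT : ∀ i : ℕ, i + 1 < n → MT.Group :=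
    fun i hi => MT.simple ⟨i, by omega⟩ * MT.simple ⟨i + 1, hi⟩ with hσT
  set σC : ∀ i : ℕ, i + 1 < n → MC.Group :=
    fun i hi => MC.simple ⟨i, by omega⟩ * MC.simple ⟨i + 1, hi⟩ with hσC
  -- orders
  have ordT : ∀ (i : ℕ) (hi : i + 1 < n), (σT i hi) ^ 3 = 1 := by
    intro i hi
    have hm : MT.M ⟨i, by omega⟩ ⟨i + 1, hi⟩ = 3 := by
      rw [hMT, if_neg (by simp [Fin.ext_iff]), if_pos (Or.inl rfl)]
    have := relT ⟨i, by omega⟩ ⟨i + 1, hi⟩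
    rwa [hm] at this
  have ordC3 : ∀ (i : ℕ) (hi : i + 1 < n), i + 2 < n → (σC i hi) ^ 3 = 1 := by
    intro i hi h2
    have hm : MC.M ⟨i, by omega⟩ ⟨i + 1, hi⟩ = 3 := by
      rw [hMC, if_neg (by simp [Fin.ext_iff]), if_pos (Or.inl rfl),
        if_neg (by simp; omega)]
    have := relC ⟨i, by omega⟩ ⟨i + 1, hi⟩
    rwa [hm] at this
  have hlast : n - 2 + 1 < n := by omega
  have ordC4 : (σC (n - 2) hlast) ^ 4 = 1 := by
    have hm : MC.M ⟨n - 2, by omega⟩ ⟨n - 2 + 1, hlast⟩ = 4 := by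
      rw [hMC, if_neg (by simp [Fin.ext_iff]), if_pos (Or.inl rfl),
        if_pos (Or.inr (by simp; omega))]
    have := relC ⟨n - 2, by omega⟩ ⟨n - 2 + 1, hlast⟩
    rwa [hm] at this
  -- the commuting relation (σC i * σC (i+1))^2 = 1
  have crossC : ∀ (i : ℕ) (h2 : i + 2 < n),
      (σC i (by omega) * σC (i + 1) (by omega : i + 1 + 1 < n)) ^ 2 = 1 := by
    intro i h2
    have key : σC i (by omega) * σC (i + 1) (by omega) =
        MC.simple ⟨i, by omega⟩ * MC.simple ⟨i + 2, h2⟩ := by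
      rw [hσC]
      have : (⟨i + 1 + 1, by omega⟩ : Fin n) = ⟨i + 2, h2⟩ := rfl
      rw [this, mul_assoc, ← mul_assoc (MC.simple ⟨i + 1, by omega⟩), ssC, one_mul]
    rw [key]
    have hm : MC.M ⟨i, by omega⟩ ⟨i + 2, h2⟩ = 2 := by
      rw [hMC, if_neg (by simp only [Fin.mk.injEq]; omega),
        if_neg (by simp only [Fin.val_mk]; omega)]
    have := relC ⟨i, by omega⟩ ⟨i + 2, h2⟩
    rwa [hm] at this
  set S : Set (MT.Group × MC.Group) :=
    {p : MT.Group × MC.Group |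
      ∃ i j : Fin n, (j : ℕ) = (i : ℕ) + 1 ∧
        p = (MT.simple i * MT.simple j, MC.simple i * MC.simple j)} with hS
  set H := Subgroup.closure S with hH
  have memH : ∀ (i : ℕ) (hi : i + 1 < n), (σT i hi, σC i hi) ∈ H := by
    intro i hi
    exact Subgroup.subset_closure ⟨⟨i, by omega⟩, ⟨i + 1, hi⟩, rfl, rfl⟩
  -- main induction : (1, σC i) ∈ H
  have key : ∀ (d i : ℕ) (hi : i + 1 < n), n - 2 - i = d → ((1 : MT.Group), σC i hi) ∈ H := by
    intro d
    induction d with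
    | zero =>
      intro i hi hd
      have hieq : i = n - 2 := by omega
      subst hieq
      have hx := memH (n - 2) hi
      have h3 : ((σT (n - 2) hi, σC (n - 2) hi) : MT.Group × MC.Group) ^ 3 =
          (1, (σC (n - 2) hi)⁻¹) := by
        have hc : (σC (n - 2) hi) ^ 3 = (σC (n - 2) hi)⁻¹ := by
          have h4 : (σC (n - 2) hi) ^ 4 = 1 := ordC4
          rw [eq_inv_iff_mul_eq_one, ← pow_succ]; exact h4
        rw [Prod.pow_mk, ordT, hc]
      have : ((1 : MT.Group), (σC (n - 2) hi)⁻¹) ∈ H := by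
        rw [← h3]; exact H.pow_mem hx 3
      have := H.inv_mem this
      simpa using this
    | succ d ih =>
      intro i hi hd
      have h2 : i + 2 < n := by omega
      have hy : ((1 : MT.Group), σC (i + 1) (by omega : i + 1 + 1 < n)) ∈ H :=
        ih (i + 1) (by omega) (by omega)
      have hx := memH i hi
      have hz : ((σT i hi) ^ 2, (1 : MC.Group)) ∈ H := by
        have := H.pow_mem (H.mul_mem hx hy) 2
        have heq : (((σT i hi, σC i hi) : MT.Group × MC.Group) *
            (1, σC (i + 1) (by omega))) ^ 2 = ((σT i hi) ^ 2, 1) := by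
          rw [Prod.mk_mul_mk, mul_one, Prod.pow_mk, crossC i h2]
        rwa [heq] at this
      have hT : ((σT i hi), (1 : MC.Group)) ∈ H := by
        have := H.inv_mem hz
        have heq : (((σT i hi) ^ 2, (1 : MC.Group)))⁻¹ = (σT i hi, 1) := by
          rw [Prod.inv_mk, inv_one]
          congr 1
          rw [eq_comm, eq_inv_iff_mul_eq_one, ← pow_succ']
          exact ordT i hi
        rwa [heq] at this
      have := H.mul_mem (H.inv_mem hT) hx
      simpa using this
  have keyC : ∀ (i : ℕ) (hi : i + 1 < n), ((1 : MT.Group), σC i hi) ∈ H :=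
    fun i hi => key (n - 2 - i) i hi rfl
  have keyT : ∀ (i : ℕ) (hi : i + 1 < n), ((σT i hi), (1 : MC.Group)) ∈ H := by
    intro i hi
    have := H.mul_mem (memH i hi) (H.inv_mem (keyC i hi))
    simpa using this
  apply le_antisymm
  · rw [Subgroup.closure_le]
    rintro p ⟨i, j, hij, rfl⟩
    exact ⟨Subgroup.subset_closure ⟨i, j, hij, rfl⟩, Subgroup.subset_closure ⟨i, j, hij, rfl⟩⟩
  · rintro ⟨g, h⟩ ⟨hg, hh⟩
    have hgT : ((g, 1) : MT.Group × MC.Group) ∈ H := by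
      have hle : Subgroup.closure
          {x : MT.Group | ∃ i j : Fin n, (j : ℕ) = (i : ℕ) + 1 ∧
            x = MT.simple i * MT.simple j} ≤
          H.comap (MonoidHom.inl MT.Group MC.Group) := by
        rw [Subgroup.closure_le]
        rintro x ⟨i, j, hij, rfl⟩
        have hi : (i : ℕ) + 1 < n := hij ▸ j.isLt
        have hkt := keyT (i : ℕ) hi
        simp only [hσT, hσC] at hkt
        rw [show (⟨(i : ℕ) + 1, hi⟩ : Fin n) = j from Fin.ext hij.symm] at hkt
        exact hkt
      exact hle hg
    have hhC : ((1, h) : MT.Group × MC.Group) ∈ H := by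
      have hle : Subgroup.closure
          {x : MC.Group | ∃ i j : Fin n, (j : ℕ) = (i : ℕ) + 1 ∧
            x = MC.simple i * MC.simple j} ≤
          H.comap (MonoidHom.inr MT.Group MC.Group) := by
        rw [Subgroup.closure_le]
        rintro x ⟨i, j, hij, rfl⟩
        have hi : (i : ℕ) + 1 < n := hij ▸ j.isLt
        have hkc := keyC (i : ℕ) hi
        simp only [hσT, hσC] at hkc
        rw [show (⟨(i : ℕ) + 1, hi⟩ : Fin n) = j from Fin.ext hij.symm] at hkc
        exact hkc
      exact hle hh
    have := H.mul_mem hgT hhC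
    simpa using this
end

section
/- Let n ≥ 3. Let W_B be the Coxeter group on generators s′₁, …, s′_n of the string Coxeter diagram with consecutive edge labels 4, 3, …, 3 (m(1,2) = 4, m(i,i+1) = 3 for 2 ≤ i ≤ n−1, m(i,j) = 2 for |i−j| ≥ 2), and let W_C be the Coxeter group on generators s″₁, …, s″_n of the string diagram with consecutive edge labels 3, …, 3, 4 (m(i,i+1) = 3 for 1 ≤ i ≤ n−2, m(n−1,n) = 4, m(i,j) = 2 for |i−j| ≥ 2). Set σ′_i = s′_i s′_{i+1} in W_B and σ″_i = s″_i s″_{i+1} in W_C for i = 1, …, n−1. Then the subgroup of W_B × W_C generated by the pairs (σ′_i, σ″_i), i = 1, …, n−1, equals the product subgroup ⟨σ′₁, …, σ′_{n−1}⟩ × ⟨σ″₁, …, σ″_{n−1}⟩. -/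
private lemma key_identity {G : Type*} [Group G] (a b c : G)
    (ha : a * a = 1) (hb : b * b = 1) (hc : c * c = 1)
    (hac : (a * c) * (a * c) = 1) (hbc : (b * c) * ((b * c) * (b * c)) = 1) :
    (a * b) * ((b * c) * (a * b) * (b * c)⁻¹) = b * c := by
  have ia : a⁻¹ = a := inv_eq_of_mul_eq_one_right ha
  have ib : b⁻¹ = b := inv_eq_of_mul_eq_one_right hb
  have ic : c⁻¹ = c := inv_eq_of_mul_eq_one_right hc
  have hca : c * a = a * c := by
    have h := inv_eq_of_mul_eq_one_right hac
    rw [mul_inv_rev, ia, ic] at h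
    exact h
  have hcb : c * b = b * c * (b * c) := by
    have h := inv_eq_of_mul_eq_one_right hbc
    rw [mul_inv_rev, ib, ic] at h
    exact h
  rw [mul_inv_rev, ib, ic]
  calc a * b * (b * c * (a * b) * (c * b))
      = a * (b * b) * (c * a) * (b * c) * b := by group
    _ = a * (c * a) * (b * c) * b := by rw [hb]; group
    _ = (a * a) * c * (b * c) * b := by rw [hca]; group
    _ = c * b * (c * b) := by rw [ha]; group
    _ = b * c * (b * c) * (b * c * (b * c)) := by rw [hcb]
    _ = b * c * ((b * c) * ((b * c) * (b * c))) := by group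
    _ = b * c := by rw [hbc, mul_one]



/-- For `n ≥ 3`, the subgroup of `W_B × W_C` (cube and cross-polytope Coxeter groups)
generated by the pairs `(σ'_i, σ''_i)` of abstract rotations equals the product of the
rotation subgroups. -/
theorem stmt_14 (n : ℕ) (hn : 3 ≤ n)
    (MB MC : CoxeterMatrix (Fin n))
    (hMB : ∀ i j : Fin n, MB.M i j =
      if i = j then 1
      else if (i : ℕ) + 1 = (j : ℕ) ∨ (j : ℕ) + 1 = (i : ℕ) then
        (if (i : ℕ) = 0 ∨ (j : ℕ) = 0 then 4 else 3)
      else 2)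
    (hMC : ∀ i j : Fin n, MC.M i j =
      if i = j then 1
      else if (i : ℕ) + 1 = (j : ℕ) ∨ (j : ℕ) + 1 = (i : ℕ) then
        (if (i : ℕ) = n - 1 ∨ (j : ℕ) = n - 1 then 4 else 3)
      else 2) :
    Subgroup.closure
        {p : MB.Group × MC.Group |
          ∃ i j : Fin n, (j : ℕ) = (i : ℕ) + 1 ∧
            p = (MB.simple i * MB.simple j, MC.simple i * MC.simple j)} =
      (Subgroup.closure
          {x : MB.Group |
            ∃ i j : Fin n, (j : ℕ) = (i : ℕ) + 1 ∧ x = MB.simple i * MB.simple j}).prod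
        (Subgroup.closure
          {x : MC.Group |
            ∃ i j : Fin n, (j : ℕ) = (i : ℕ) + 1 ∧ x = MC.simple i * MC.simple j}) := by
  set H := Subgroup.closure
        {p : MB.Group × MC.Group |
          ∃ i j : Fin n, (j : ℕ) = (i : ℕ) + 1 ∧
            p = (MB.simple i * MB.simple j, MC.simple i * MC.simple j)} with hH
  have sqB : ∀ i : Fin n, MB.simple i * MB.simple i = 1 := fun i =>
    MB.toCoxeterSystem.simple_mul_simple_self i
  have powB : ∀ i j : Fin n, (MB.simple i * MB.simple j) ^ (MB.M i j) = 1 := fun i j =>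
    MB.toCoxeterSystem.simple_mul_simple_pow i j
  have powC : ∀ i j : Fin n, (MC.simple i * MC.simple j) ^ (MC.M i j) = 1 := fun i j =>
    MC.toCoxeterSystem.simple_mul_simple_pow i j
  -- the generating pairs are in H
  have hgen : ∀ (k : ℕ) (h : k + 1 < n),
      ((MB.simple ⟨k, Nat.lt_of_succ_lt h⟩ * MB.simple ⟨k + 1, h⟩,
        MC.simple ⟨k, Nat.lt_of_succ_lt h⟩ * MC.simple ⟨k + 1, h⟩)) ∈ H := by
    intro k h
    exact Subgroup.subset_closure ⟨⟨k, Nat.lt_of_succ_lt h⟩, ⟨k + 1, h⟩, rfl, rfl⟩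
  -- key membership : (σ'_k, 1) ∈ H for all k
  have hLeft : ∀ (k : ℕ) (h : k + 1 < n),
      ((MB.simple ⟨k, Nat.lt_of_succ_lt h⟩ * MB.simple ⟨k + 1, h⟩, (1 : MC.Group))) ∈ H := by
    intro k
    induction k with
    | zero =>
      intro h
      have h0 : (0 : ℕ) < n := by omega
      have hB4 : MB.M ⟨0, h0⟩ ⟨1, h⟩ = 4 := by
        rw [hMB]; simp [Fin.ext_iff]
      have hC3 : MC.M ⟨0, h0⟩ ⟨1, h⟩ = 3 := by
        rw [hMC]; simp [Fin.ext_iff] <;> omega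
      set a := MB.simple ⟨0, h0⟩ * MB.simple ⟨1, h⟩ with hadef
      set b := MC.simple ⟨0, h0⟩ * MC.simple ⟨1, h⟩ with hbdef
      have ha4 : a ^ 4 = 1 := by rw [hadef, ← hB4]; exact powB _ _
      have hb3 : b ^ 3 = 1 := by rw [hbdef, ← hC3]; exact powC _ _
      have hmem : ((a, b) : MB.Group × MC.Group) ∈ H := hgen 0 h
      have h3 : (((a, b) : MB.Group × MC.Group) ^ 3)⁻¹ ∈ H := (H.inv_mem (H.pow_mem hmem 3))
      have key : (((a, b) : MB.Group × MC.Group) ^ 3)⁻¹ = (a, 1) := by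
        have h1 : (a ^ 3)⁻¹ = a := by
          apply inv_eq_of_mul_eq_one_left
          rw [← pow_succ']
          exact ha4
        simp [Prod.pow_def, hb3, h1]
      rwa [key] at h3
    | succ k ih =>
      intro h
      have hk1 : k + 1 < n := Nat.lt_of_succ_lt h
      have hprev := ih hk1
      have hg := hgen (k + 1) h
      -- conjugate and multiply
      have hmem : ((MB.simple ⟨k, by omega⟩ * MB.simple ⟨k + 1, hk1⟩, (1 : MC.Group)) *
          ((MB.simple ⟨k + 1, hk1⟩ * MB.simple ⟨k + 2, h⟩,
            MC.simple ⟨k + 1, hk1⟩ * MC.simple ⟨k + 2, h⟩) *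
           (MB.simple ⟨k, by omega⟩ * MB.simple ⟨k + 1, hk1⟩, (1 : MC.Group)) *
           (MB.simple ⟨k + 1, hk1⟩ * MB.simple ⟨k + 2, h⟩,
            MC.simple ⟨k + 1, hk1⟩ * MC.simple ⟨k + 2, h⟩)⁻¹)) ∈ H := by
        exact H.mul_mem hprev (H.mul_mem (H.mul_mem hg hprev) (H.inv_mem hg))
      have hac : (MB.simple ⟨k, by omega⟩ * MB.simple ⟨k + 2, h⟩) *
          (MB.simple ⟨k, by omega⟩ * MB.simple ⟨k + 2, h⟩) = 1 := by
        have h2 : MB.M ⟨k, by omega⟩ ⟨k + 2, h⟩ = 2 := by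
          rw [hMB]; simp [Fin.ext_iff] <;> omega
        have := powB ⟨k, by omega⟩ ⟨k + 2, h⟩
        rw [h2, pow_two] at this
        exact this
      have hbc : (MB.simple ⟨k + 1, hk1⟩ * MB.simple ⟨k + 2, h⟩) *
          ((MB.simple ⟨k + 1, hk1⟩ * MB.simple ⟨k + 2, h⟩) *
           (MB.simple ⟨k + 1, hk1⟩ * MB.simple ⟨k + 2, h⟩)) = 1 := by
        have h3 : MB.M ⟨k + 1, hk1⟩ ⟨k + 2, h⟩ = 3 := by
          rw [hMB]; simp [Fin.ext_iff] <;> omega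
        have := powB ⟨k + 1, hk1⟩ ⟨k + 2, h⟩
        rw [h3, pow_succ, pow_two] at this
        rw [← mul_assoc]
        exact this
      have hkey := key_identity (MB.simple ⟨k, by omega⟩) (MB.simple ⟨k + 1, hk1⟩)
        (MB.simple ⟨k + 2, h⟩) (sqB _) (sqB _) (sqB _) hac hbc
      have heq : ((MB.simple ⟨k, by omega⟩ * MB.simple ⟨k + 1, hk1⟩, (1 : MC.Group)) *
          ((MB.simple ⟨k + 1, hk1⟩ * MB.simple ⟨k + 2, h⟩,
            MC.simple ⟨k + 1, hk1⟩ * MC.simple ⟨k + 2, h⟩) *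
           (MB.simple ⟨k, by omega⟩ * MB.simple ⟨k + 1, hk1⟩, (1 : MC.Group)) *
           (MB.simple ⟨k + 1, hk1⟩ * MB.simple ⟨k + 2, h⟩,
            MC.simple ⟨k + 1, hk1⟩ * MC.simple ⟨k + 2, h⟩)⁻¹)) =
          (MB.simple ⟨k + 1, hk1⟩ * MB.simple ⟨k + 2, h⟩, (1 : MC.Group)) := by
        refine Prod.ext hkey ?_
        show (1 : MC.Group) * (MC.simple ⟨k + 1, hk1⟩ * MC.simple ⟨k + 2, h⟩ * 1 *
          (MC.simple ⟨k + 1, hk1⟩ * MC.simple ⟨k + 2, h⟩)⁻¹) = 1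
        group
      rwa [heq] at hmem
  -- (1, σ''_k) ∈ H
  have hRight : ∀ (k : ℕ) (h : k + 1 < n),
      (((1 : MB.Group), MC.simple ⟨k, Nat.lt_of_succ_lt h⟩ * MC.simple ⟨k + 1, h⟩)) ∈ H := by
    intro k h
    have := H.mul_mem (H.inv_mem (hLeft k h)) (hgen k h)
    have heq : ((MB.simple ⟨k, Nat.lt_of_succ_lt h⟩ * MB.simple ⟨k + 1, h⟩,
        (1 : MC.Group)))⁻¹ *
        (MB.simple ⟨k, Nat.lt_of_succ_lt h⟩ * MB.simple ⟨k + 1, h⟩,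
          MC.simple ⟨k, Nat.lt_of_succ_lt h⟩ * MC.simple ⟨k + 1, h⟩) =
        ((1 : MB.Group), MC.simple ⟨k, Nat.lt_of_succ_lt h⟩ * MC.simple ⟨k + 1, h⟩) := by
      refine Prod.ext ?_ ?_
      · show (MB.simple ⟨k, Nat.lt_of_succ_lt h⟩ * MB.simple ⟨k + 1, h⟩)⁻¹ *
          (MB.simple ⟨k, Nat.lt_of_succ_lt h⟩ * MB.simple ⟨k + 1, h⟩) = 1
        group
      · show (1 : MC.Group)⁻¹ * (MC.simple ⟨k, Nat.lt_of_succ_lt h⟩ * MC.simple ⟨k + 1, h⟩) = _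
        group
    rwa [heq] at this
  apply le_antisymm
  · rw [Subgroup.closure_le]
    rintro p ⟨i, j, hij, rfl⟩
    exact ⟨Subgroup.subset_closure ⟨i, j, hij, rfl⟩, Subgroup.subset_closure ⟨i, j, hij, rfl⟩⟩
  · rw [Subgroup.prod_le_iff]
    constructor
    · rw [MonoidHom.map_closure, Subgroup.closure_le]
      rintro p ⟨x, ⟨i, j, hij, rfl⟩, rfl⟩
      have hiv : (i : ℕ) + 1 < n := by omega
      have hi : i = ⟨(i : ℕ), i.2⟩ := rfl
      have hj : j = ⟨(i : ℕ) + 1, hiv⟩ := by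
        apply Fin.ext; exact hij
      rw [hi, hj]
      exact hLeft (i : ℕ) hiv
    · rw [MonoidHom.map_closure, Subgroup.closure_le]
      rintro p ⟨x, ⟨i, j, hij, rfl⟩, rfl⟩
      have hiv : (i : ℕ) + 1 < n := by omega
      have hi : i = ⟨(i : ℕ), i.2⟩ := rfl
      have hj : j = ⟨(i : ℕ) + 1, hiv⟩ := by
        apply Fin.ext; exact hij
      rw [hi, hj]
      exact hRight (i : ℕ) hiv
end

section
/- Let n ≥ 3. Let W_T, W_B, W_C be the Coxeter groups on n generators of the string Coxeter diagrams with consecutive edge labels (3, …, 3), (4, 3, …, 3), and (3, …, 3, 4) respectively (and m(i,j) = 2 for |i−j| ≥ 2 in each), with generators s_i, s′_i, s″_i. Set σ_i = s_i s_{i+1}, σ′_i = s′_i s′_{i+1}, σ″_i = s″_i s″_{i+1} for i = 1, …, n−1. Then the subgroup of W_T × W_B × W_C generated by the triples (σ_i, σ′_i, σ″_i), i = 1, …, n−1, equals the product subgroup ⟨σ₁, …, σ_{n−1}⟩ × ⟨σ′₁, …, σ′_{n−1}⟩ × ⟨σ″₁, …, σ″_{n−1}⟩. -/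
theorem aux_step_up {W : Type*} [Group W] (K : Subgroup W) (u w : W)
    (hu : u ∈ K) (hconj : ∀ b ∈ K, w * b * w⁻¹ ∈ K) (hw : w * w = 1)
    (hx3 : (u⁻¹ * w) ^ 3 = 1) : u⁻¹ * w ∈ K := by
  have hwi : w⁻¹ = w := inv_eq_of_mul_eq_one_right hw
  have h2 : (u⁻¹ * w) * (u⁻¹ * w) ∈ K := by
    have he : (u⁻¹ * w) * (u⁻¹ * w) = u⁻¹ * (w * u⁻¹ * w⁻¹) := by
      rw [hwi]; group
    rw [he]
    exact mul_mem (inv_mem hu) (hconj _ (inv_mem hu))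
  have h3 : u⁻¹ * w = ((u⁻¹ * w) * (u⁻¹ * w))⁻¹ := by
    have h := hx3
    rw [show (3 : ℕ) = 2 + 1 from rfl, pow_succ, pow_two] at h
    exact (inv_eq_of_mul_eq_one_right h).symm
  rw [h3]
  exact inv_mem h2

theorem aux_step_down {W : Type*} [Group W] (K : Subgroup W) (u w : W)
    (hu : u ∈ K) (hconj : ∀ b ∈ K, w * b * w⁻¹ ∈ K) (hw : w * w = 1)
    (hx3 : (w * u⁻¹) ^ 3 = 1) : w * u⁻¹ ∈ K := by
  have hwi : w⁻¹ = w := inv_eq_of_mul_eq_one_right hw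
  have h2 : (w * u⁻¹) * (w * u⁻¹) ∈ K := by
    have he : (w * u⁻¹) * (w * u⁻¹) = (w * u⁻¹ * w⁻¹) * u⁻¹ := by
      rw [hwi]; group
    rw [he]
    exact mul_mem (hconj _ (inv_mem hu)) (inv_mem hu)
  have h3 : w * u⁻¹ = ((w * u⁻¹) * (w * u⁻¹))⁻¹ := by
    have h := hx3
    rw [show (3 : ℕ) = 2 + 1 from rfl, pow_succ, pow_two] at h
    exact (inv_eq_of_mul_eq_one_right h).symm
  rw [h3]
  exact inv_mem h2

/-- The embedding of the middle factor into a triple product. -/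
def embMid {A B C : Type*} [Group A] [Group B] [Group C] : B →* A × B × C where
  toFun b := (1, b, 1)
  map_one' := rfl
  map_mul' x y := by ext <;> simp

/-- The embedding of the right factor into a triple product. -/
def embRight {A B C : Type*} [Group A] [Group B] [Group C] : C →* A × B × C where
  toFun c := (1, 1, c)
  map_one' := rfl
  map_mul' x y := by ext <;> simp


/-- The embedding of the left factor into a triple product. -/
def embLeft {A B C : Type*} [Group A] [Group B] [Group C] : A →* A × B × C where
  toFun a := (a, 1, 1)
  map_one' := rfl
  map_mul' x y := by ext <;> simp

/-- For `n ≥ 3`, the subgroup of `W_T × W_B × W_C` generated by the triples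
`(σ_i, σ'_i, σ''_i)` of abstract rotations equals the product of the three
rotation subgroups. -/
theorem stmt_15 (n : ℕ) (hn : 3 ≤ n)
    (MT MB MC : CoxeterMatrix (Fin n))
    (hMT : ∀ i j : Fin n, MT.M i j =
      if i = j then 1
      else if (i : ℕ) + 1 = (j : ℕ) ∨ (j : ℕ) + 1 = (i : ℕ) then 3 else 2)
    (hMB : ∀ i j : Fin n, MB.M i j =
      if i = j then 1
      else if (i : ℕ) + 1 = (j : ℕ) ∨ (j : ℕ) + 1 = (i : ℕ) then
        (if (i : ℕ) = 0 ∨ (j : ℕ) = 0 then 4 else 3)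
      else 2)
    (hMC : ∀ i j : Fin n, MC.M i j =
      if i = j then 1
      else if (i : ℕ) + 1 = (j : ℕ) ∨ (j : ℕ) + 1 = (i : ℕ) then
        (if (i : ℕ) = n - 1 ∨ (j : ℕ) = n - 1 then 4 else 3)
      else 2) :
    Subgroup.closure
        {p : MT.Group × MB.Group × MC.Group |
          ∃ i j : Fin n, (j : ℕ) = (i : ℕ) + 1 ∧
            p = (MT.simple i * MT.simple j,
                 MB.simple i * MB.simple j,
                 MC.simple i * MC.simple j)} =
      (Subgroup.closure
          {x : MT.Group |
            ∃ i j : Fin n, (j : ℕ) = (i : ℕ) + 1 ∧ x = MT.simple i * MT.simple j}).prod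
        ((Subgroup.closure
            {x : MB.Group |
              ∃ i j : Fin n, (j : ℕ) = (i : ℕ) + 1 ∧ x = MB.simple i * MB.simple j}).prod
          (Subgroup.closure
            {x : MC.Group |
              ∃ i j : Fin n, (j : ℕ) = (i : ℕ) + 1 ∧ x = MC.simple i * MC.simple j})) := by
  set G := Subgroup.closure
        {p : MT.Group × MB.Group × MC.Group |
          ∃ i j : Fin n, (j : ℕ) = (i : ℕ) + 1 ∧
            p = (MT.simple i * MT.simple j,
                 MB.simple i * MB.simple j,
                 MC.simple i * MC.simple j)} with hGdef
  -- basic power relations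
  have powT : ∀ i j : Fin n, (MT.simple i * MT.simple j) ^ (MT.M i j) = 1 := by
    intro i j
    have h := MT.toCoxeterSystem.simple_mul_simple_pow i j
    simpa using h
  have powB : ∀ i j : Fin n, (MB.simple i * MB.simple j) ^ (MB.M i j) = 1 := by
    intro i j
    have h := MB.toCoxeterSystem.simple_mul_simple_pow i j
    simpa using h
  have powC : ∀ i j : Fin n, (MC.simple i * MC.simple j) ^ (MC.M i j) = 1 := by
    intro i j
    have h := MC.toCoxeterSystem.simple_mul_simple_pow i j
    simpa using h
  have sqB : ∀ i : Fin n, MB.simple i * MB.simple i = 1 := by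
    intro i
    have h := MB.toCoxeterSystem.simple_mul_simple_self i
    simpa using h
  have sqC : ∀ i : Fin n, MC.simple i * MC.simple i = 1 := by
    intro i
    have h := MC.toCoxeterSystem.simple_mul_simple_self i
    simpa using h
  have invB : ∀ i : Fin n, (MB.simple i)⁻¹ = MB.simple i := by
    intro i
    have h := MB.toCoxeterSystem.inv_simple i
    simpa using h
  have invC : ∀ i : Fin n, (MC.simple i)⁻¹ = MC.simple i := by
    intro i
    have h := MC.toCoxeterSystem.inv_simple i
    simpa using h
  -- evaluated relations
  have hT3 : ∀ i j : Fin n, (j : ℕ) = (i : ℕ) + 1 →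
      (MT.simple i * MT.simple j) ^ 3 = 1 := by
    intro i j h
    have hm : MT.M i j = 3 := by
      rw [hMT, if_neg (show ¬ i = j by simp only [Fin.ext_iff]; omega),
        if_pos (Or.inl h.symm)]
    have := powT i j
    rwa [hm] at this
  have hB3 : ∀ i j : Fin n, (j : ℕ) = (i : ℕ) + 1 → (i : ℕ) ≠ 0 →
      (MB.simple i * MB.simple j) ^ 3 = 1 := by
    intro i j h hi
    have hm : MB.M i j = 3 := by
      rw [hMB, if_neg (show ¬ i = j by simp only [Fin.ext_iff]; omega),
        if_pos (Or.inl h.symm), if_neg (by omega)]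
    have := powB i j
    rwa [hm] at this
  have hB4 : ∀ i j : Fin n, (j : ℕ) = (i : ℕ) + 1 → (i : ℕ) = 0 →
      (MB.simple i * MB.simple j) ^ 4 = 1 := by
    intro i j h hi
    have hm : MB.M i j = 4 := by
      rw [hMB, if_neg (show ¬ i = j by simp only [Fin.ext_iff]; omega),
        if_pos (Or.inl h.symm), if_pos (Or.inl hi)]
    have := powB i j
    rwa [hm] at this
  have hC3 : ∀ i j : Fin n, (j : ℕ) = (i : ℕ) + 1 → (j : ℕ) ≠ n - 1 →
      (MC.simple i * MC.simple j) ^ 3 = 1 := by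
    intro i j h hj
    have hm : MC.M i j = 3 := by
      have hi : (i : ℕ) ≠ n - 1 := by have := j.isLt; omega
      rw [hMC, if_neg (show ¬ i = j by simp only [Fin.ext_iff]; omega),
        if_pos (Or.inl h.symm), if_neg (by omega)]
    have := powC i j
    rwa [hm] at this
  have hC4 : ∀ i j : Fin n, (j : ℕ) = (i : ℕ) + 1 → (j : ℕ) = n - 1 →
      (MC.simple i * MC.simple j) ^ 4 = 1 := by
    intro i j h hj
    have hm : MC.M i j = 4 := by
      rw [hMC, if_neg (show ¬ i = j by simp only [Fin.ext_iff]; omega),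
        if_pos (Or.inl h.symm), if_pos (Or.inr hj)]
    have := powC i j
    rwa [hm] at this
  have hB2 : ∀ i l : Fin n, (l : ℕ) = (i : ℕ) + 2 →
      (MB.simple i * MB.simple l) * (MB.simple i * MB.simple l) = 1 := by
    intro i l h
    have hm : MB.M i l = 2 := by
      rw [hMB, if_neg (show ¬ i = l by simp only [Fin.ext_iff]; omega),
        if_neg (by omega)]
    have := powB i l
    rwa [hm, pow_two] at this
  have hC2 : ∀ i l : Fin n, (l : ℕ) = (i : ℕ) + 2 →
      (MC.simple i * MC.simple l) * (MC.simple i * MC.simple l) = 1 := by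
    intro i l h
    have hm : MC.M i l = 2 := by
      rw [hMC, if_neg (show ¬ i = l by simp only [Fin.ext_iff]; omega),
        if_neg (by omega)]
    have := powC i l
    rwa [hm, pow_two] at this
  -- generators of G
  have memA : ∀ i j : Fin n, (j : ℕ) = (i : ℕ) + 1 →
      (MT.simple i * MT.simple j, MB.simple i * MB.simple j,
        MC.simple i * MC.simple j) ∈ G := by
    intro i j h
    exact Subgroup.subset_closure ⟨i, j, h, rfl⟩
  -- conjugation lemmas
  have conjB : ∀ g ∈ G, ∀ b : MB.Group, ((1 : MT.Group), b, (1 : MC.Group)) ∈ G →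
      ((1 : MT.Group), g.2.1 * b * g.2.1⁻¹, (1 : MC.Group)) ∈ G := by
    intro g hg b hb
    have he : ((1 : MT.Group), g.2.1 * b * g.2.1⁻¹, (1 : MC.Group)) =
        g * ((1 : MT.Group), b, (1 : MC.Group)) * g⁻¹ := by
      ext <;> simp
    rw [he]
    exact mul_mem (mul_mem hg hb) (inv_mem hg)
  have conjC : ∀ g ∈ G, ∀ c : MC.Group, ((1 : MT.Group), (1 : MB.Group), c) ∈ G →
      ((1 : MT.Group), (1 : MB.Group), g.2.2 * c * g.2.2⁻¹) ∈ G := by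
    intro g hg c hc
    have he : ((1 : MT.Group), (1 : MB.Group), g.2.2 * c * g.2.2⁻¹) =
        g * ((1 : MT.Group), (1 : MB.Group), c) * g⁻¹ := by
      ext <;> simp
    rw [he]
    exact mul_mem (mul_mem hg hc) (inv_mem hg)
  -- the middle-factor subgroup
  set KB : Subgroup MB.Group := Subgroup.comap (embMid : MB.Group →* _) G with hKBdef
  have memKB : ∀ b : MB.Group, b ∈ KB ↔ ((1 : MT.Group), b, (1 : MC.Group)) ∈ G := by
    intro b; rfl
  set KC : Subgroup MC.Group := Subgroup.comap (embRight : MC.Group →* _) G with hKCdef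
  have memKC : ∀ c : MC.Group, c ∈ KC ↔ ((1 : MT.Group), (1 : MB.Group), c) ∈ G := by
    intro c; rfl
  -- base case for B
  have baseB : ((1 : MT.Group), MB.simple ⟨0, by omega⟩ * MB.simple ⟨1, by omega⟩,
      (1 : MC.Group)) ∈ G := by
    set i : Fin n := ⟨0, by omega⟩
    set j : Fin n := ⟨1, by omega⟩
    have hij : (j : ℕ) = (i : ℕ) + 1 := rfl
    have h3 := pow_mem (memA i j hij) 3
    rw [Prod.pow_mk, Prod.pow_mk, hT3 i j hij, hC3 i j hij (by simp [j]; omega)] at h3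
    have h4 : (MB.simple i * MB.simple j) ^ 3 * (MB.simple i * MB.simple j) = 1 := by
      rw [← pow_succ]; exact hB4 i j hij rfl
    have hinv : ((MB.simple i * MB.simple j) ^ 3)⁻¹ = MB.simple i * MB.simple j :=
      inv_eq_of_mul_eq_one_right h4
    have := inv_mem h3
    rw [Prod.inv_mk, Prod.inv_mk, inv_one, inv_one, hinv] at this
    exact this

  -- upward induction for the middle factor
  have KBgen : ∀ m : ℕ, ∀ hm : m + 1 < n,
      ((1 : MT.Group), MB.simple ⟨m, by omega⟩ * MB.simple ⟨m + 1, hm⟩,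
        (1 : MC.Group)) ∈ G := by
    intro m
    induction m with
    | zero => intro hm; exact baseB
    | succ k ih =>
      intro hm
      set i : Fin n := ⟨k, by omega⟩ with hidef
      set K : Fin n := ⟨k + 1, by omega⟩ with hKdef
      set L : Fin n := ⟨k + 2, by omega⟩ with hLdef
      have hu : MB.simple i * MB.simple K ∈ KB := (memKB _).mpr (ih (by omega))
      have hw := hB2 i L rfl
      have hconj : ∀ b ∈ KB,
          (MB.simple i * MB.simple L) * b * (MB.simple i * MB.simple L)⁻¹ ∈ KB := by
        intro b hb
        have hg := mul_mem (memA i K rfl) (memA K L rfl)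
        rw [Prod.mk_mul_mk, Prod.mk_mul_mk] at hg
        have hcb := conjB _ hg b ((memKB b).mp hb)
        rw [memKB]
        have hprod : (MB.simple i * MB.simple K) * (MB.simple K * MB.simple L) =
            MB.simple i * MB.simple L := by
          rw [mul_assoc, ← mul_assoc (MB.simple K) (MB.simple K), sqB K, one_mul]
        rw [← hprod]
        exact hcb
      have hx : (MB.simple i * MB.simple K)⁻¹ * (MB.simple i * MB.simple L) =
          MB.simple K * MB.simple L := by
        rw [mul_inv_rev, invB, invB, mul_assoc,
          ← mul_assoc (MB.simple i) (MB.simple i), sqB i, one_mul]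
      have hx3 : ((MB.simple i * MB.simple K)⁻¹ * (MB.simple i * MB.simple L)) ^ 3 = 1 := by
        rw [hx]; exact hB3 K L rfl (Nat.succ_ne_zero k)
      have hfin := aux_step_up KB _ _ hu hconj hw hx3
      rw [hx] at hfin
      exact (memKB _).mp hfin
  have KBall : ∀ i j : Fin n, (j : ℕ) = (i : ℕ) + 1 →
      ((1 : MT.Group), MB.simple i * MB.simple j, (1 : MC.Group)) ∈ G := by
    intro i j h
    have hjlt := j.isLt
    have hj : j = ⟨(i : ℕ) + 1, by omega⟩ := by rw [Fin.ext_iff]; exact h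
    rw [hj]
    exact KBgen (i : ℕ) (by omega)
  -- base case for C
  have baseC : ((1 : MT.Group), (1 : MB.Group),
      MC.simple ⟨n - 2, by omega⟩ * MC.simple ⟨n - 1, by omega⟩) ∈ G := by
    set i : Fin n := ⟨n - 2, by omega⟩
    set j : Fin n := ⟨n - 1, by omega⟩
    have hij : (j : ℕ) = (i : ℕ) + 1 := by show n - 1 = n - 2 + 1; omega
    have h3 := pow_mem (memA i j hij) 3
    rw [Prod.pow_mk, Prod.pow_mk, hT3 i j hij,
      hB3 i j hij (show ¬ (n - 2 = 0) by omega)] at h3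
    have h4 : (MC.simple i * MC.simple j) ^ 3 * (MC.simple i * MC.simple j) = 1 := by
      rw [← pow_succ]; exact hC4 i j hij rfl
    have hinv : ((MC.simple i * MC.simple j) ^ 3)⁻¹ = MC.simple i * MC.simple j :=
      inv_eq_of_mul_eq_one_right h4
    have := inv_mem h3
    rw [Prod.inv_mk, Prod.inv_mk, inv_one, inv_one, hinv] at this
    exact this
  -- downward induction for the right factor
  have KCgen : ∀ d m : ℕ, ∀ hm : m + 1 < n, m + d + 2 = n →
      ((1 : MT.Group), (1 : MB.Group),
        MC.simple ⟨m, by omega⟩ * MC.simple ⟨m + 1, hm⟩) ∈ G := by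
    intro d
    induction d with
    | zero =>
      intro m hm hd
      have hm' : m = n - 2 := by omega
      subst hm'
      have hje : (⟨n - 2 + 1, hm⟩ : Fin n) = ⟨n - 1, by omega⟩ := by
        simp only [Fin.mk.injEq]; omega
      rw [hje]
      exact baseC
    | succ k ih =>
      intro m hm hd
      have hu' := ih (m + 1) (by omega) (by omega)
      set i : Fin n := ⟨m, by omega⟩
      set K : Fin n := ⟨m + 1, by omega⟩
      set L : Fin n := ⟨m + 2, by omega⟩
      have hu : MC.simple K * MC.simple L ∈ KC := (memKC _).mpr hu'
      have hw := hC2 i L rfl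
      have hconj : ∀ c ∈ KC,
          (MC.simple i * MC.simple L) * c * (MC.simple i * MC.simple L)⁻¹ ∈ KC := by
        intro c hc
        have hg := mul_mem (memA i K rfl) (memA K L rfl)
        rw [Prod.mk_mul_mk, Prod.mk_mul_mk] at hg
        have hcb := conjC _ hg c ((memKC c).mp hc)
        rw [memKC]
        have hprod : (MC.simple i * MC.simple K) * (MC.simple K * MC.simple L) =
            MC.simple i * MC.simple L := by
          rw [mul_assoc, ← mul_assoc (MC.simple K) (MC.simple K), sqC K, one_mul]
        rw [← hprod]
        exact hcb
      have hx : (MC.simple i * MC.simple L) * (MC.simple K * MC.simple L)⁻¹ =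
          MC.simple i * MC.simple K := by
        rw [mul_inv_rev, invC, invC, ← mul_assoc, mul_assoc (MC.simple i),
          sqC L, mul_one]
      have hx3 : ((MC.simple i * MC.simple L) * (MC.simple K * MC.simple L)⁻¹) ^ 3 = 1 := by
        rw [hx]; exact hC3 i K rfl (show ¬ (m + 1 = n - 1) by omega)
      have hfin := aux_step_down KC _ _ hu hconj hw hx3
      rw [hx] at hfin
      exact (memKC _).mp hfin
  have KCall : ∀ i j : Fin n, (j : ℕ) = (i : ℕ) + 1 →
      ((1 : MT.Group), (1 : MB.Group), MC.simple i * MC.simple j) ∈ G := by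
    intro i j h
    have hjlt := j.isLt
    have hj : j = ⟨(i : ℕ) + 1, by omega⟩ := by rw [Fin.ext_iff]; exact h
    rw [hj]
    exact KCgen (n - (i : ℕ) - 2) (i : ℕ) (by omega) (by omega)
  -- the left factor
  have genT : ∀ i j : Fin n, (j : ℕ) = (i : ℕ) + 1 →
      ((MT.simple i * MT.simple j), (1 : MB.Group), (1 : MC.Group)) ∈ G := by
    intro i j h
    have h1 := memA i j h
    have h2 := KBall i j h
    have h3 := KCall i j h
    have he : ((MT.simple i * MT.simple j), (1 : MB.Group), (1 : MC.Group)) =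
        (MT.simple i * MT.simple j, MB.simple i * MB.simple j,
          MC.simple i * MC.simple j) *
        ((1 : MT.Group), MB.simple i * MB.simple j, (1 : MC.Group))⁻¹ *
        ((1 : MT.Group), (1 : MB.Group), MC.simple i * MC.simple j)⁻¹ := by
      ext <;> simp [mul_assoc]
    rw [he]
    exact mul_mem (mul_mem h1 (inv_mem h2)) (inv_mem h3)
  -- conclusion
  apply le_antisymm
  · rw [hGdef, Subgroup.closure_le]
    rintro p ⟨i, j, hij, rfl⟩
    exact Subgroup.mem_prod.mpr ⟨Subgroup.subset_closure ⟨i, j, hij, rfl⟩,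
      Subgroup.mem_prod.mpr ⟨Subgroup.subset_closure ⟨i, j, hij, rfl⟩,
        Subgroup.subset_closure ⟨i, j, hij, rfl⟩⟩⟩
  · intro p hp
    rw [Subgroup.mem_prod, Subgroup.mem_prod] at hp
    obtain ⟨h1, h2, h3⟩ := hp
    have m1 : (p.1, (1 : MB.Group), (1 : MC.Group)) ∈ G := by
      have hle : Subgroup.closure {x : MT.Group |
          ∃ i j : Fin n, (j : ℕ) = (i : ℕ) + 1 ∧ x = MT.simple i * MT.simple j} ≤
          Subgroup.comap (embLeft : MT.Group →* _) G := by
        rw [Subgroup.closure_le]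
        rintro x ⟨i, j, hij, rfl⟩
        simp only [SetLike.mem_coe, Subgroup.mem_comap]
        exact genT i j hij
      exact hle h1
    have m2 : ((1 : MT.Group), p.2.1, (1 : MC.Group)) ∈ G := by
      have hle : Subgroup.closure {x : MB.Group |
          ∃ i j : Fin n, (j : ℕ) = (i : ℕ) + 1 ∧ x = MB.simple i * MB.simple j} ≤
          Subgroup.comap (embMid : MB.Group →* _) G := by
        rw [Subgroup.closure_le]
        rintro x ⟨i, j, hij, rfl⟩
        simp only [SetLike.mem_coe, Subgroup.mem_comap]
        exact KBall i j hij
      exact hle h2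
    have m3 : ((1 : MT.Group), (1 : MB.Group), p.2.2) ∈ G := by
      have hle : Subgroup.closure {x : MC.Group |
          ∃ i j : Fin n, (j : ℕ) = (i : ℕ) + 1 ∧ x = MC.simple i * MC.simple j} ≤
          Subgroup.comap (embRight : MC.Group →* _) G := by
        rw [Subgroup.closure_le]
        rintro x ⟨i, j, hij, rfl⟩
        simp only [SetLike.mem_coe, Subgroup.mem_comap]
        exact KCall i j hij
      exact hle h3
    have hpe : p = (p.1, (1 : MB.Group), (1 : MC.Group)) *
        (((1 : MT.Group), p.2.1, (1 : MC.Group)) *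
          ((1 : MT.Group), (1 : MB.Group), p.2.2)) := by
      ext <;> simp
    rw [hpe]
    exact mul_mem m1 (mul_mem m2 m3)
end

section
/- Let n ≥ 4. Let W_B be the Coxeter group on generators s′₁, …, s′_n of the string Coxeter diagram with consecutive edge labels 4, 3, …, 3, and let W_C be the Coxeter group on generators s″₁, …, s″_n of the string diagram with consecutive edge labels 3, …, 3, 4 (in each, m(i,j) = 2 for |i−j| ≥ 2). Set σ′_i = s′_i s′_{i+1}, σ″_i = s″_i s″_{i+1}, and β_i = (σ′_i, σ″_i) ∈ W_B × W_C for i = 1, …, n−1. Then ⟨β₁, …, β_{n−2}⟩ ⊓ ⟨β₂, …, β_{n−1}⟩ ≠ ⟨β₂, …, β_{n−2}⟩ as subgroups of W_B × W_C. -/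
private lemma inv_invol {G : Type*} [Group G] {a : G} (h : a * a = 1) : a⁻¹ = a :=
  inv_eq_of_mul_eq_one_right h

private lemma mul_invol_inv {G : Type*} [Group G] {a b : G} (ha : a * a = 1) (hb : b * b = 1) :
    (a * b)⁻¹ = b * a := by rw [mul_inv_rev, inv_invol ha, inv_invol hb]

private lemma cancel_pt {G : Type*} [Group G] {a : G} (h : a * a = 1) :
    ∀ x : G, a * (a * x) = x := fun x => by rw [← mul_assoc, h, one_mul]

private lemma comm_pt {G : Type*} [Group G] {a b : G} (ha : a * a = 1) (hb : b * b = 1)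
    (h : (a * b) ^ 2 = 1) : ∀ x : G, a * (b * x) = b * (a * x) := by
  have h1 : (a * b) * (a * b) = 1 := by rw [← pow_two]; exact h
  have h2 : a * b = (a * b)⁻¹ := eq_inv_of_mul_eq_one_left h1
  rw [mul_invol_inv ha hb] at h2
  intro x
  rw [← mul_assoc, h2, mul_assoc]

private lemma braid_pt {G : Type*} [Group G] {a b : G} (ha : a * a = 1) (hb : b * b = 1)
    (h : (a * b) ^ 3 = 1) : ∀ x : G, a * (b * (a * x)) = b * (a * (b * x)) := by
  have h1 : (a * b) ^ 2 * (a * b) = 1 := by rw [← pow_succ]; exact h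
  have h2 : (a * b) ^ 2 = (a * b)⁻¹ := eq_inv_of_mul_eq_one_left h1
  rw [mul_invol_inv ha hb, pow_two] at h2
  have h3 : a * b * (a * b) * b = b * a * b := by rw [h2]
  simp only [mul_assoc] at h3
  rw [hb, mul_one] at h3
  -- h3 : a * (b * a) = b * (a * b)
  intro x
  calc a * (b * (a * x)) = a * (b * a) * x := by simp only [mul_assoc]
    _ = b * (a * b) * x := by rw [h3]
    _ = b * (a * (b * x)) := by simp only [mul_assoc]

private lemma braid4_pt {G : Type*} [Group G] {a b : G} (ha : a * a = 1) (hb : b * b = 1)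
    (h : (a * b) ^ 4 = 1) : ∀ x : G, a * (b * (a * (b * x))) = b * (a * (b * (a * x))) := by
  have h1 : (a * b) ^ 2 * (a * b) ^ 2 = 1 := by rw [← pow_add]; exact h
  have h2 : (a * b) ^ 2 = ((a * b) ^ 2)⁻¹ := eq_inv_of_mul_eq_one_left h1
  rw [← inv_pow, mul_invol_inv ha hb] at h2
  rw [pow_two, pow_two] at h2
  intro x
  calc a * (b * (a * (b * x))) = a * b * (a * b) * x := by simp only [mul_assoc]
    _ = b * a * (b * a) * x := by rw [h2]
    _ = b * (a * (b * (a * x))) := by simp only [mul_assoc]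

private lemma pow3_of4 {G : Type*} [Group G] {a b : G} (ha : a * a = 1) (hb : b * b = 1)
    (h : (a * b) ^ 4 = 1) : (a * b) ^ 3 = b * a := by
  have h1 : (a * b) ^ 3 * (a * b) = 1 := by rw [← pow_succ]; exact h
  have h2 := eq_inv_of_mul_eq_one_left h1
  rwa [mul_invol_inv ha hb] at h2

private lemma pow6_of4 {G : Type*} [Group G] {a b : G}
    (h : (a * b) ^ 4 = 1) : (a * b) ^ 6 = a * b * (a * b) := by
  have h1 : (a * b) ^ 6 = (a * b) ^ 2 * (a * b) ^ 4 := by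
    rw [← pow_add]
  rw [h1, h, mul_one, pow_two]

private lemma auxB {G : Type*} [Group G] {a b c : G} (ha : a * a = 1) (hb : b * b = 1)
    (hc : c * c = 1) (h4 : (a * b) ^ 4 = 1) (h3 : (b * c) ^ 3 = 1) (h2 : (a * c) ^ 2 = 1) :
    (a * b) ^ 6 * (b * c)⁻¹ * (a * b) ^ 3 * (b * c) * (a * b) ^ 3 = b * c := by
  have hbb := cancel_pt hb
  have haa := cancel_pt ha
  have hac := comm_pt ha hc h2
  have h3' : (c * b) ^ 3 = 1 := by
    have e : c * b = (b * c)⁻¹ := (mul_invol_inv hb hc).symm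
    rw [e, inv_pow, h3, inv_one]
  have hcbc := braid_pt hc hb h3'
  have habab := braid4_pt ha hb h4
  rw [pow6_of4 h4, pow3_of4 ha hb h4, mul_invol_inv hb hc]
  simp only [mul_assoc]
  -- word: a b a b c b b a b c b a
  rw [hbb]      -- a b a b c a b c b a
  rw [← hac]    -- a b a b a c b c b a
  rw [hcbc]     -- a b a b a b c b b a
  rw [hbb]      -- a b a b a b c a
  rw [habab]    -- b a b a a b c a
  rw [haa]      -- b a b b c a
  rw [hbb]      -- b a c a
  rw [hac]      -- b c a a
  rw [ha, mul_one]

private lemma auxC {G : Type*} [Group G] {u w : G} (h3 : u ^ 3 = 1) :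
    u ^ 6 * w⁻¹ * u ^ 3 * w * u ^ 3 = 1 := by
  have h6 : u ^ 6 = 1 := by
    rw [show (6 : ℕ) = 3 * 2 by norm_num, pow_mul, h3, one_pow]
  rw [h6, h3]
  group

private lemma auxChain {G : Type*} [Group G] {p q r : G} (hp : p * p = 1) (hq : q * q = 1)
    (hr : r * r = 1) (hpq : (p * q) ^ 3 = 1) (hqr : (q * r) ^ 3 = 1) (hpr : (p * r) ^ 2 = 1) :
    (q * r) * (p * q)⁻¹ * (q * r)⁻¹ * ((p * q) * (q * r)⁻¹) = p * q := by
  have hqq := cancel_pt hq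
  have hrr := cancel_pt hr
  have hpr' := comm_pt hp hr hpr
  have hqrq := braid_pt hq hr hqr
  have hpqp := braid_pt hp hq hpq
  rw [mul_invol_inv hp hq, mul_invol_inv hq hr]
  simp only [mul_assoc]
  -- word: q r q p r q p q r q
  rw [hpr']    -- q r q r p q p q r q
  rw [hqrq]    -- r q r r p q p q r q
  rw [hrr]     -- r q p q p q r q
  rw [hpqp]    -- r q q p q q r q
  rw [hqq]     -- r p q q r q
  rw [hqq]     -- r p r q
  rw [← hpr']  -- p r r q
  rw [hrr]

private lemma swap_sq {α : Type*} [DecidableEq α] (a b : α) : (Equiv.swap a b) ^ 2 = 1 := by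
  rw [pow_two, Equiv.swap_mul_self]

private lemma pow4_of_sq {G : Type*} [Group G] {x : G} (h : x ^ 2 = 1) : x ^ 4 = 1 := by
  rw [show (4 : ℕ) = 2 * 2 by norm_num, pow_mul, h, one_pow]

private lemma swap3 {α : Type*} [DecidableEq α] [Fintype α] {a b c : α}
    (hab : a ≠ b) (hac : a ≠ c) (hbc : b ≠ c) :
    (Equiv.swap a b * Equiv.swap a c) ^ 3 = 1 := by
  have h := Equiv.Perm.isThreeCycle_swap_mul_swap_same hab hac hbc
  rw [← h.orderOf]
  exact pow_orderOf_eq_one _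

private lemma swap2 {α : Type*} [DecidableEq α] {a b c d : α}
    (hac : a ≠ c) (had : a ≠ d) (hbc : b ≠ c) (hbd : b ≠ d) :
    (Equiv.swap a b * Equiv.swap c d) ^ 2 = 1 := by
  have hcomm : Commute (Equiv.swap a b) (Equiv.swap c d) := by
    apply Equiv.Perm.Disjoint.commute
    intro x
    by_cases hx : x = c ∨ x = d
    · left
      rcases hx with rfl | rfl
      · exact Equiv.swap_apply_of_ne_of_ne hac.symm hbc.symm
      · exact Equiv.swap_apply_of_ne_of_ne had.symm hbd.symm
    · right
      push_neg at hx
      exact Equiv.swap_apply_of_ne_of_ne hx.1 hx.2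
  rw [hcomm.mul_pow, swap_sq, swap_sq, one_mul]

private def ptd (n k : ℕ) : Fin (n + 1) := ⟨min k n, by omega⟩

private lemma ptd_val (n k : ℕ) (h : k ≤ n) : ((ptd n k : Fin (n + 1)) : ℕ) = k := by
  simp only [ptd]
  omega

private lemma ptd_ne {n a b : ℕ} (ha : a ≤ n) (hb : b ≤ n) (h : a ≠ b) :
    ptd n a ≠ ptd n b := by
  simp only [ne_eq, ptd, Fin.mk.injEq]
  omega

private lemma swap3chain {n a b c : ℕ} (ha : a ≤ n) (hb : b ≤ n) (hc : c ≤ n)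
    (h1 : a ≠ b) (h2 : b ≠ c) (h3 : a ≠ c) :
    (Equiv.swap (ptd n a) (ptd n b) * Equiv.swap (ptd n b) (ptd n c)) ^ 3 = 1 := by
  rw [Equiv.swap_comm (ptd n a) (ptd n b)]
  exact swap3 (ptd_ne hb ha h1.symm) (ptd_ne hb hc h2) (ptd_ne ha hc h3)

private lemma swap3center {n a b c : ℕ} (ha : a ≤ n) (hb : b ≤ n) (hc : c ≤ n)
    (h1 : a ≠ b) (h2 : a ≠ c) (h3 : b ≠ c) :
    (Equiv.swap (ptd n a) (ptd n b) * Equiv.swap (ptd n a) (ptd n c)) ^ 3 = 1 :=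
  swap3 (ptd_ne ha hb h1) (ptd_ne ha hc h2) (ptd_ne hb hc h3)

private lemma swap2' {n a b c d : ℕ} (ha : a ≤ n) (hb : b ≤ n) (hc : c ≤ n) (hd : d ≤ n)
    (h1 : a ≠ c) (h2 : a ≠ d) (h3 : b ≠ c) (h4 : b ≠ d) :
    (Equiv.swap (ptd n a) (ptd n b) * Equiv.swap (ptd n c) (ptd n d)) ^ 2 = 1 :=
  swap2 (ptd_ne ha hc h1) (ptd_ne ha hd h2) (ptd_ne hb hc h3) (ptd_ne hb hd h4)

private def fB (n : ℕ) (i : Fin n) : Equiv.Perm (Fin (n + 1)) :=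
  if (i : ℕ) = 0 then 1 else Equiv.swap (ptd n ((i : ℕ) - 1)) (ptd n (i : ℕ))

private def fC (n : ℕ) (i : Fin n) : Equiv.Perm (Fin (n + 1)) :=
  if (i : ℕ) = n - 1 then 1
  else if (i : ℕ) = 0 then Equiv.swap (ptd n 0) (ptd n n)
  else Equiv.swap (ptd n ((i : ℕ) - 1)) (ptd n (i : ℕ))

private lemma liftB {n : ℕ} (hn : 4 ≤ n) (MB : CoxeterMatrix (Fin n))
    (hMB : ∀ i j : Fin n, MB.M i j =
      if i = j then 1
      else if (i : ℕ) + 1 = (j : ℕ) ∨ (j : ℕ) + 1 = (i : ℕ) then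
        (if (i : ℕ) = 0 ∨ (j : ℕ) = 0 then 4 else 3)
      else 2) :
    MB.IsLiftable (fB n) := by
  intro i j
  have hi := i.isLt
  have hj := j.isLt
  show (fB n i * fB n j) ^ MB.M i j = 1
  rw [hMB i j]
  rcases eq_or_ne i j with rfl | hij
  · rw [if_pos rfl, pow_one]
    simp only [fB]
    split_ifs
    · rw [one_mul]
    · rw [Equiv.swap_mul_self]
  · rw [if_neg hij]
    have hvij : (i : ℕ) ≠ (j : ℕ) := fun h => hij (Fin.ext h)
    by_cases hadj : (i : ℕ) + 1 = (j : ℕ) ∨ (j : ℕ) + 1 = (i : ℕ)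
    · rw [if_pos hadj]
      by_cases h0 : (i : ℕ) = 0 ∨ (j : ℕ) = 0
      · rw [if_pos h0]
        simp only [fB]
        rcases h0 with h0 | h0
        · rw [if_pos h0, if_neg (show ¬(j : ℕ) = 0 by omega), one_mul]
          exact pow4_of_sq (swap_sq _ _)
        · rw [if_pos h0, if_neg (show ¬(i : ℕ) = 0 by omega), mul_one]
          exact pow4_of_sq (swap_sq _ _)
      · rw [if_neg h0]
        push_neg at h0
        simp only [fB]
        rw [if_neg h0.1, if_neg h0.2]
        rcases hadj with h | h
        · rw [show (j : ℕ) - 1 = (i : ℕ) by omega]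
          exact swap3chain (by omega) (by omega) (by omega) (by omega) (by omega) (by omega)
        · rw [show (i : ℕ) - 1 = (j : ℕ) by omega,
            Equiv.swap_comm (ptd n (j : ℕ)) (ptd n (i : ℕ)),
            Equiv.swap_comm (ptd n ((j : ℕ) - 1)) (ptd n (j : ℕ))]
          exact swap3chain (by omega) (by omega) (by omega) (by omega) (by omega) (by omega)
    · rw [if_neg hadj]
      push_neg at hadj
      simp only [fB]
      split_ifs with h1 h2 h3
      · omega
      · rw [one_mul]; exact swap_sq _ _
      · rw [mul_one]; exact swap_sq _ _
      · exact swap2' (by omega) (by omega) (by omega) (by omega)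
          (by omega) (by omega) (by omega) (by omega)

private lemma liftC {n : ℕ} (hn : 4 ≤ n) (MC : CoxeterMatrix (Fin n))
    (hMC : ∀ i j : Fin n, MC.M i j =
      if i = j then 1
      else if (i : ℕ) + 1 = (j : ℕ) ∨ (j : ℕ) + 1 = (i : ℕ) then
        (if (i : ℕ) = n - 1 ∨ (j : ℕ) = n - 1 then 4 else 3)
      else 2) :
    MC.IsLiftable (fC n) := by
  intro i j
  have hi := i.isLt
  have hj := j.isLt
  show (fC n i * fC n j) ^ MC.M i j = 1
  rw [hMC i j]
  rcases eq_or_ne i j with rfl | hij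
  · rw [if_pos rfl, pow_one]
    simp only [fC]
    split_ifs
    · rw [one_mul]
    · rw [Equiv.swap_mul_self]
    · rw [Equiv.swap_mul_self]
  · rw [if_neg hij]
    have hvij : (i : ℕ) ≠ (j : ℕ) := fun h => hij (Fin.ext h)
    by_cases hadj : (i : ℕ) + 1 = (j : ℕ) ∨ (j : ℕ) + 1 = (i : ℕ)
    · rw [if_pos hadj]
      by_cases hlast : (i : ℕ) = n - 1 ∨ (j : ℕ) = n - 1
      · rw [if_pos hlast]
        simp only [fC]
        rcases hlast with hl | hl
        · rw [if_pos hl, if_neg (show ¬(j : ℕ) = n - 1 by omega),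
            if_neg (show ¬(j : ℕ) = 0 by omega), one_mul]
          exact pow4_of_sq (swap_sq _ _)
        · rw [if_pos hl, if_neg (show ¬(i : ℕ) = n - 1 by omega),
            if_neg (show ¬(i : ℕ) = 0 by omega), mul_one]
          exact pow4_of_sq (swap_sq _ _)
      · rw [if_neg hlast]
        push_neg at hlast
        simp only [fC]
        rw [if_neg hlast.1, if_neg hlast.2]
        by_cases hi0 : (i : ℕ) = 0
        · -- then j = 1
          have hj1 : (j : ℕ) = 1 := by omega
          rw [if_pos hi0, if_neg (show ¬(j : ℕ) = 0 by omega),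
            show (j : ℕ) - 1 = 0 by omega]
          exact swap3center (by omega) (by omega) (by omega) (by omega) (by omega) (by omega)
        · rw [if_neg hi0]
          by_cases hj0 : (j : ℕ) = 0
          · -- then i = 1
            have hi1 : (i : ℕ) = 1 := by omega
            rw [if_pos hj0, show (i : ℕ) - 1 = 0 by omega]
            rw [Equiv.swap_comm (ptd n 0) (ptd n (i : ℕ))]
            -- (swap (pt i) (pt 0) * swap (pt 0) (pt n))^3
            exact swap3chain (by omega) (by omega) (by omega) (by omega) (by omega) (by omega)
          · rw [if_neg hj0]
            rcases hadj with h | h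
            · rw [show (j : ℕ) - 1 = (i : ℕ) by omega]
              exact swap3chain (by omega) (by omega) (by omega) (by omega) (by omega) (by omega)
            · rw [show (i : ℕ) - 1 = (j : ℕ) by omega,
                Equiv.swap_comm (ptd n (j : ℕ)) (ptd n (i : ℕ)),
                Equiv.swap_comm (ptd n ((j : ℕ) - 1)) (ptd n (j : ℕ))]
              exact swap3chain (by omega) (by omega) (by omega) (by omega) (by omega) (by omega)
    · rw [if_neg hadj]
      push_neg at hadj
      simp only [fC]
      split_ifs with h1 h2 h3 h4 h5 h6 h7
      · omega
      · rw [one_mul]; exact swap_sq _ _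
      · rw [one_mul]; exact swap_sq _ _
      · rw [mul_one]; exact swap_sq _ _
      · omega
      · exact swap2' (by omega) (by omega) (by omega) (by omega)
          (by omega) (by omega) (by omega) (by omega)
      · rw [mul_one]; exact swap_sq _ _
      · exact swap2' (by omega) (by omega) (by omega) (by omega)
          (by omega) (by omega) (by omega) (by omega)
      · exact swap2' (by omega) (by omega) (by omega) (by omega)
          (by omega) (by omega) (by omega) (by omega)

private def idxd {n : ℕ} (h : 0 < n) (k : ℕ) : Fin n := ⟨min k (n - 1), by omega⟩

private lemma idxd_val {n : ℕ} (h : 0 < n) (k : ℕ) (hk : k ≤ n - 1) :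
    ((idxd h k : Fin n) : ℕ) = k := by
  simp only [idxd]
  omega

private lemma notinD {n : ℕ} (hn : 4 ≤ n) (MB MC : CoxeterMatrix (Fin n))
    (hMB : ∀ i j : Fin n, MB.M i j =
      if i = j then 1
      else if (i : ℕ) + 1 = (j : ℕ) ∨ (j : ℕ) + 1 = (i : ℕ) then
        (if (i : ℕ) = 0 ∨ (j : ℕ) = 0 then 4 else 3)
      else 2)
    (hMC : ∀ i j : Fin n, MC.M i j =
      if i = j then 1
      else if (i : ℕ) + 1 = (j : ℕ) ∨ (j : ℕ) + 1 = (i : ℕ) then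
        (if (i : ℕ) = n - 1 ∨ (j : ℕ) = n - 1 then 4 else 3)
      else 2)
    (h0 : 0 < n) :
    (MB.simple (idxd h0 1) * MB.simple (idxd h0 2), (1 : MC.Group)) ∉
      Subgroup.closure
        {p : MB.Group × MC.Group |
          ∃ i j : Fin n, (j : ℕ) = (i : ℕ) + 1 ∧ 1 ≤ (i : ℕ) ∧ (j : ℕ) ≤ n - 2 ∧
            p = (MB.simple i * MB.simple j, MC.simple i * MC.simple j)} := by
  intro hmem
  obtain ⟨φB, φBs⟩ : ∃ φ : MB.Group →* Equiv.Perm (Fin (n + 1)),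
      ∀ i, φ (MB.simple i) = fB n i :=
    ⟨MB.toCoxeterSystem.lift ⟨fB n, liftB hn MB hMB⟩,
      fun i => MB.toCoxeterSystem.lift_apply_simple _ i⟩
  obtain ⟨φC, φCs⟩ : ∃ φ : MC.Group →* Equiv.Perm (Fin (n + 1)),
      ∀ i, φ (MC.simple i) = fC n i :=
    ⟨MC.toCoxeterSystem.lift ⟨fC n, liftC hn MC hMC⟩,
      fun i => MC.toCoxeterSystem.lift_apply_simple _ i⟩
  set S : Subgroup (MB.Group × MC.Group) :=
    { carrier := {p | φB p.1 = φC p.2}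
      one_mem' := by simp only [Set.mem_setOf_eq, Prod.fst_one, Prod.snd_one, map_one]
      mul_mem' := fun {x y} hx hy => by
        simp only [Set.mem_setOf_eq] at hx hy ⊢
        rw [Prod.fst_mul, Prod.snd_mul, map_mul, map_mul, hx, hy]
      inv_mem' := fun {x} hx => by
        simp only [Set.mem_setOf_eq] at hx ⊢
        rw [Prod.fst_inv, Prod.snd_inv, map_inv, map_inv, hx] } with hS
  have hle : Subgroup.closure
      {p : MB.Group × MC.Group |
        ∃ i j : Fin n, (j : ℕ) = (i : ℕ) + 1 ∧ 1 ≤ (i : ℕ) ∧ (j : ℕ) ≤ n - 2 ∧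
          p = (MB.simple i * MB.simple j, MC.simple i * MC.simple j)} ≤ S := by
    rw [Subgroup.closure_le]
    rintro p ⟨i, j, hij, hi1, hj2, rfl⟩
    have hiv := i.isLt
    have hjv := j.isLt
    show φB (MB.simple i * MB.simple j) = φC (MC.simple i * MC.simple j)
    have hi0 : ¬(i : ℕ) = 0 := by omega
    have hj0 : ¬(j : ℕ) = 0 := by omega
    have hin : ¬(i : ℕ) = n - 1 := by omega
    have hjn : ¬(j : ℕ) = n - 1 := by omega
    rw [map_mul, map_mul, φBs, φBs, φCs, φCs]
    simp only [fB, fC]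
    rw [if_neg hi0, if_neg hj0, if_neg hin, if_neg hjn, if_neg hi0, if_neg hj0]
  have hfinal := hle hmem
  have hfe : φB (MB.simple (idxd h0 1) * MB.simple (idxd h0 2)) = φC 1 := hfinal
  rw [map_mul, φBs, φBs, map_one] at hfe
  simp only [fB] at hfe
  rw [idxd_val h0 1 (by omega), idxd_val h0 2 (by omega)] at hfe
  rw [if_neg (show ¬(1 : ℕ) = 0 by omega), if_neg (show ¬(2 : ℕ) = 0 by omega)] at hfe
  rw [show (1 : ℕ) - 1 = 0 by norm_num, show (2 : ℕ) - 1 = 1 by norm_num] at hfe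
  have happ := congrArg (fun σ : Equiv.Perm (Fin (n + 1)) => σ (ptd n 1)) hfe
  simp only [Equiv.Perm.mul_apply, Equiv.Perm.one_apply] at happ
  rw [Equiv.swap_apply_left,
    Equiv.swap_apply_of_ne_of_ne (ptd_ne (by omega) (by omega) (by omega))
      (ptd_ne (by omega) (by omega) (by omega))] at happ
  exact ptd_ne (show (2 : ℕ) ≤ n by omega) (by omega) (by omega) happ

/-- For `n ≥ 4`, in `W_B × W_C` (cube and cross-polytope Coxeter groups) with
`β_k = (σ'_k, σ''_k)` the pairs of abstract rotations (`σ_k = s_{k-1} s_k` in 0-indexed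
generators, so `β_k` corresponds to the consecutive pair `(i, j) = (k-1, k)`), we have
`⟨β₁, …, β_{n-2}⟩ ⊓ ⟨β₂, …, β_{n-1}⟩ ≠ ⟨β₂, …, β_{n-2}⟩`. -/
theorem stmt_16 (n : ℕ) (hn : 4 ≤ n)
    (MB MC : CoxeterMatrix (Fin n))
    (hMB : ∀ i j : Fin n, MB.M i j =
      if i = j then 1
      else if (i : ℕ) + 1 = (j : ℕ) ∨ (j : ℕ) + 1 = (i : ℕ) then
        (if (i : ℕ) = 0 ∨ (j : ℕ) = 0 then 4 else 3)
      else 2)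
    (hMC : ∀ i j : Fin n, MC.M i j =
      if i = j then 1
      else if (i : ℕ) + 1 = (j : ℕ) ∨ (j : ℕ) + 1 = (i : ℕ) then
        (if (i : ℕ) = n - 1 ∨ (j : ℕ) = n - 1 then 4 else 3)
      else 2) :
    Subgroup.closure
        {p : MB.Group × MC.Group |
          ∃ i j : Fin n, (j : ℕ) = (i : ℕ) + 1 ∧ (j : ℕ) ≤ n - 2 ∧
            p = (MB.simple i * MB.simple j, MC.simple i * MC.simple j)} ⊓
      Subgroup.closure
        {p : MB.Group × MC.Group |
          ∃ i j : Fin n, (j : ℕ) = (i : ℕ) + 1 ∧ 1 ≤ (i : ℕ) ∧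
            p = (MB.simple i * MB.simple j, MC.simple i * MC.simple j)} ≠
      Subgroup.closure
        {p : MB.Group × MC.Group |
          ∃ i j : Fin n, (j : ℕ) = (i : ℕ) + 1 ∧ 1 ≤ (i : ℕ) ∧ (j : ℕ) ≤ n - 2 ∧
            p = (MB.simple i * MB.simple j, MC.simple i * MC.simple j)} := by
  intro hEq
  have h0 : 0 < n := by omega
  have hval : ∀ (k : ℕ), k ≤ n - 1 → ((idxd h0 k : Fin n) : ℕ) = k :=
    fun k hk => idxd_val h0 k hk
  have neFin : ∀ a b : ℕ, a ≤ n - 1 → b ≤ n - 1 → a ≠ b → idxd h0 a ≠ idxd h0 b := by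
    intro a b ha hb hab hq
    have := congrArg Fin.val hq
    rw [hval a ha, hval b hb] at this
    omega
  have sqB : ∀ i : Fin n, MB.simple i * MB.simple i = 1 :=
    fun i => MB.toCoxeterSystem.simple_mul_simple_self i
  have sqC : ∀ i : Fin n, MC.simple i * MC.simple i = 1 :=
    fun i => MC.toCoxeterSystem.simple_mul_simple_self i
  have relB : ∀ i j : Fin n, (MB.simple i * MB.simple j) ^ MB.M i j = 1 :=
    fun i j => MB.toCoxeterSystem.simple_mul_simple_pow i j
  have relC : ∀ i j : Fin n, (MC.simple i * MC.simple j) ^ MC.M i j = 1 :=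
    fun i j => MC.toCoxeterSystem.simple_mul_simple_pow i j
  -- specific relations
  have relB3 : ∀ k : ℕ, 1 ≤ k → k + 1 ≤ n - 1 →
      (MB.simple (idxd h0 k) * MB.simple (idxd h0 (k + 1))) ^ 3 = 1 := by
    intro k h1 h2
    have h := relB (idxd h0 k) (idxd h0 (k + 1))
    rw [hMB, hval k (by omega), hval (k + 1) (by omega),
      if_neg (neFin k (k + 1) (by omega) (by omega) (by omega)),
      if_pos (Or.inl rfl), if_neg (by omega)] at h
    exact h
  have relB4 : (MB.simple (idxd h0 0) * MB.simple (idxd h0 1)) ^ 4 = 1 := by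
    have h := relB (idxd h0 0) (idxd h0 1)
    rw [hMB, hval 0 (by omega), hval 1 (by omega),
      if_neg (neFin 0 1 (by omega) (by omega) (by omega)),
      if_pos (by omega), if_pos (by omega)] at h
    exact h
  have relB2 : ∀ k : ℕ, k + 2 ≤ n - 1 →
      (MB.simple (idxd h0 k) * MB.simple (idxd h0 (k + 2))) ^ 2 = 1 := by
    intro k h2
    have h := relB (idxd h0 k) (idxd h0 (k + 2))
    rw [hMB, hval k (by omega), hval (k + 2) (by omega),
      if_neg (neFin k (k + 2) (by omega) (by omega) (by omega)),
      if_neg (by omega)] at h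
    exact h
  have relC3 : ∀ k : ℕ, k + 1 ≤ n - 2 →
      (MC.simple (idxd h0 k) * MC.simple (idxd h0 (k + 1))) ^ 3 = 1 := by
    intro k h2
    have h := relC (idxd h0 k) (idxd h0 (k + 1))
    rw [hMC, hval k (by omega), hval (k + 1) (by omega),
      if_neg (neFin k (k + 1) (by omega) (by omega) (by omega)),
      if_pos (Or.inl rfl), if_neg (by omega)] at h
    exact h
  have relC4 : (MC.simple (idxd h0 (n - 2)) * MC.simple (idxd h0 (n - 1))) ^ 4 = 1 := by
    have h := relC (idxd h0 (n - 2)) (idxd h0 (n - 1))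
    rw [hMC, hval (n - 2) (by omega), hval (n - 1) (by omega),
      if_neg (neFin (n - 2) (n - 1) (by omega) (by omega) (by omega)),
      if_pos (by omega), if_pos (by omega)] at h
    exact h
  -- membership helpers
  have memS1 : ∀ a b : ℕ, b = a + 1 → b ≤ n - 2 →
      (MB.simple (idxd h0 a) * MB.simple (idxd h0 b),
        MC.simple (idxd h0 a) * MC.simple (idxd h0 b)) ∈
        Subgroup.closure
          {p : MB.Group × MC.Group |
            ∃ i j : Fin n, (j : ℕ) = (i : ℕ) + 1 ∧ (j : ℕ) ≤ n - 2 ∧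
              p = (MB.simple i * MB.simple j, MC.simple i * MC.simple j)} := by
    intro a b hb hbn
    apply Subgroup.subset_closure
    refine ⟨idxd h0 a, idxd h0 b, ?_, ?_, rfl⟩
    · rw [hval a (by omega), hval b (by omega)]; exact hb
    · rw [hval b (by omega)]; omega
  have memS2 : ∀ a b : ℕ, b = a + 1 → 1 ≤ a → b ≤ n - 1 →
      (MB.simple (idxd h0 a) * MB.simple (idxd h0 b),
        MC.simple (idxd h0 a) * MC.simple (idxd h0 b)) ∈
        Subgroup.closure
          {p : MB.Group × MC.Group |
            ∃ i j : Fin n, (j : ℕ) = (i : ℕ) + 1 ∧ 1 ≤ (i : ℕ) ∧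
              p = (MB.simple i * MB.simple j, MC.simple i * MC.simple j)} := by
    intro a b hb ha hbn
    apply Subgroup.subset_closure
    refine ⟨idxd h0 a, idxd h0 b, ?_, ?_, rfl⟩
    · rw [hval a (by omega), hval b (by omega)]; exact hb
    · rw [hval a (by omega)]; omega
  -- the witness element
  -- g0 = (σ'₂, 1)
  -- Step 1 : g0 is in the left ("facet") closure
  have hg0L : (MB.simple (idxd h0 1) * MB.simple (idxd h0 2), (1 : MC.Group)) ∈
      Subgroup.closure
        {p : MB.Group × MC.Group |
          ∃ i j : Fin n, (j : ℕ) = (i : ℕ) + 1 ∧ (j : ℕ) ≤ n - 2 ∧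
            p = (MB.simple i * MB.simple j, MC.simple i * MC.simple j)} := by
    have hP0 := memS1 0 1 rfl (by omega)
    have hP1 := memS1 1 2 rfl (by omega)
    have r12 : (MB.simple (idxd h0 1) * MB.simple (idxd h0 2)) ^ 3 = 1 := by
      have h := relB3 1 (by omega) (by omega)
      rwa [show (1 : ℕ) + 1 = 2 by norm_num] at h
    have r02 : (MB.simple (idxd h0 0) * MB.simple (idxd h0 2)) ^ 2 = 1 := by
      have h := relB2 0 (by omega)
      rwa [show (0 : ℕ) + 2 = 2 by norm_num] at h
    have rc01 : (MC.simple (idxd h0 0) * MC.simple (idxd h0 1)) ^ 3 = 1 := by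
      have h := relC3 0 (by omega)
      rwa [show (0 : ℕ) + 1 = 1 by norm_num] at h
    have hE : ((MB.simple (idxd h0 0) * MB.simple (idxd h0 1),
          MC.simple (idxd h0 0) * MC.simple (idxd h0 1)) : MB.Group × MC.Group) ^ 6 *
        (MB.simple (idxd h0 1) * MB.simple (idxd h0 2),
          MC.simple (idxd h0 1) * MC.simple (idxd h0 2))⁻¹ *
        (MB.simple (idxd h0 0) * MB.simple (idxd h0 1),
          MC.simple (idxd h0 0) * MC.simple (idxd h0 1)) ^ 3 *
        (MB.simple (idxd h0 1) * MB.simple (idxd h0 2),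
          MC.simple (idxd h0 1) * MC.simple (idxd h0 2)) *
        (MB.simple (idxd h0 0) * MB.simple (idxd h0 1),
          MC.simple (idxd h0 0) * MC.simple (idxd h0 1)) ^ 3 =
        (MB.simple (idxd h0 1) * MB.simple (idxd h0 2), (1 : MC.Group)) := by
      rw [Prod.ext_iff]
      constructor
      · simp only [Prod.fst_mul, Prod.pow_fst, Prod.fst_inv]
        exact auxB (sqB _) (sqB _) (sqB _) relB4 r12 r02
      · simp only [Prod.snd_mul, Prod.pow_snd, Prod.snd_inv]
        exact auxC rc01
    rw [← hE]
    exact mul_mem (mul_mem (mul_mem (mul_mem (pow_mem hP0 6) (inv_mem hP1))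
      (pow_mem hP0 3)) hP1) (pow_mem hP0 3)
  -- Step 2 : g0 is in the right ("vertex-figure") closure, by a descending chain
  have chain : ∀ m : ℕ, m ≤ n - 3 →
      (MB.simple (idxd h0 (n - 2 - m)) * MB.simple (idxd h0 (n - 1 - m)), (1 : MC.Group)) ∈
        Subgroup.closure
          {p : MB.Group × MC.Group |
            ∃ i j : Fin n, (j : ℕ) = (i : ℕ) + 1 ∧ 1 ≤ (i : ℕ) ∧
              p = (MB.simple i * MB.simple j, MC.simple i * MC.simple j)} := by
    intro m
    induction m with
    | zero =>
      intro _
      simp only [Nat.sub_zero]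
      have hmem := memS2 (n - 2) (n - 1) (by omega) (by omega) (by omega)
      have hpow : ((MB.simple (idxd h0 (n - 2)) * MB.simple (idxd h0 (n - 1)),
            MC.simple (idxd h0 (n - 2)) * MC.simple (idxd h0 (n - 1))) :
            MB.Group × MC.Group) ^ 4 =
          (MB.simple (idxd h0 (n - 2)) * MB.simple (idxd h0 (n - 1)), (1 : MC.Group)) := by
        rw [Prod.ext_iff]
        constructor
        · simp only [Prod.pow_fst]
          have h3 := relB3 (n - 2) (by omega) (by omega)
          rw [show n - 2 + 1 = n - 1 by omega] at h3
          rw [pow_succ, h3, one_mul]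
        · simp only [Prod.pow_snd]
          exact relC4
      rw [← hpow]
      exact pow_mem hmem 4
    | succ m ih =>
      intro hm
      have prev := ih (by omega)
      rw [show n - 2 - (m + 1) = n - 3 - m by omega, show n - 1 - (m + 1) = n - 2 - m by omega]
      have hmemk := memS2 (n - 2 - m) (n - 1 - m) (by omega) (by omega) (by omega)
      have hmemk1 := memS2 (n - 3 - m) (n - 2 - m) (by omega) (by omega) (by omega)
      have hpq : (MB.simple (idxd h0 (n - 3 - m)) * MB.simple (idxd h0 (n - 2 - m))) ^ 3 = 1 := by
        have h := relB3 (n - 3 - m) (by omega) (by omega)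
        rwa [show n - 3 - m + 1 = n - 2 - m by omega] at h
      have hqr : (MB.simple (idxd h0 (n - 2 - m)) * MB.simple (idxd h0 (n - 1 - m))) ^ 3 = 1 := by
        have h := relB3 (n - 2 - m) (by omega) (by omega)
        rwa [show n - 2 - m + 1 = n - 1 - m by omega] at h
      have hpr : (MB.simple (idxd h0 (n - 3 - m)) * MB.simple (idxd h0 (n - 1 - m))) ^ 2 = 1 := by
        have h := relB2 (n - 3 - m) (by omega)
        rwa [show n - 3 - m + 2 = n - 1 - m by omega] at h
      have hE : ((MB.simple (idxd h0 (n - 2 - m)) * MB.simple (idxd h0 (n - 1 - m)),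
            MC.simple (idxd h0 (n - 2 - m)) * MC.simple (idxd h0 (n - 1 - m))) :
            MB.Group × MC.Group) *
          (MB.simple (idxd h0 (n - 3 - m)) * MB.simple (idxd h0 (n - 2 - m)),
            MC.simple (idxd h0 (n - 3 - m)) * MC.simple (idxd h0 (n - 2 - m)))⁻¹ *
          (MB.simple (idxd h0 (n - 2 - m)) * MB.simple (idxd h0 (n - 1 - m)),
            (1 : MC.Group))⁻¹ *
          ((MB.simple (idxd h0 (n - 3 - m)) * MB.simple (idxd h0 (n - 2 - m)),
            MC.simple (idxd h0 (n - 3 - m)) * MC.simple (idxd h0 (n - 2 - m))) *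
           (MB.simple (idxd h0 (n - 2 - m)) * MB.simple (idxd h0 (n - 1 - m)),
            MC.simple (idxd h0 (n - 2 - m)) * MC.simple (idxd h0 (n - 1 - m)))⁻¹) =
          (MB.simple (idxd h0 (n - 3 - m)) * MB.simple (idxd h0 (n - 2 - m)),
            (1 : MC.Group)) := by
        rw [Prod.ext_iff]
        constructor
        · simp only [Prod.fst_mul, Prod.fst_inv]
          exact auxChain (sqB _) (sqB _) (sqB _) hpq hqr hpr
        · simp only [Prod.snd_mul, Prod.snd_inv]
          group
      rw [← hE]
      exact mul_mem (mul_mem (mul_mem hmemk (inv_mem hmemk1)) (inv_mem prev))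
        (mul_mem hmemk1 (inv_mem hmemk))
  have hg0R := chain (n - 3) (le_refl _)
  rw [show n - 2 - (n - 3) = 1 by omega, show n - 1 - (n - 3) = 2 by omega] at hg0R
  -- combine
  have hg0D : (MB.simple (idxd h0 1) * MB.simple (idxd h0 2), (1 : MC.Group)) ∈
      Subgroup.closure
        {p : MB.Group × MC.Group |
          ∃ i j : Fin n, (j : ℕ) = (i : ℕ) + 1 ∧ 1 ≤ (i : ℕ) ∧ (j : ℕ) ≤ n - 2 ∧
            p = (MB.simple i * MB.simple j, MC.simple i * MC.simple j)} := by
    rw [← hEq]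
    exact Subgroup.mem_inf.mpr ⟨hg0L, hg0R⟩
  exact notinD hn MB MC hMB hMC h0 hg0D
end
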